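/- arXiv:2512.01332 — 6 statements merged into one kernel-verified Lean document; each statement's English description precedes it below -/
import Mathlib

section
/- Let P = y_1Δ⁰_{S_1} + ⋯ + y_mΔ⁰_{S_m} ⊂ ℝ^n where y_1,…,y_m are positive real numbers and S_1,…,S_m are admissible sets of signed vectors. If the point (x_1,…,x_n) lies in P, then for every (r_1,…,r_n) ∈ ℝ^n with 0 ≤ r_j ≤ 1 for all j ∈ [n], the point (r_1x_1,…,r_nx_n) also lies in P. -/
open Pointwise

noncomputable section

/-- The signed standard basis vector of `ℝ^n`: `(i, true) ↦ e i`, `(i, false) ↦ -e i`. -/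
def sgnVec (n : ℕ) (p : Fin n × Bool) : Fin n → ℝ :=
  if p.2 then Pi.single p.1 1 else -Pi.single p.1 1

/-- A set of signed vectors is admissible if it is nonempty and contains at most one of
`e i`, `-e i` for each `i`. -/
def Adm (n : ℕ) (S : Finset (Fin n × Bool)) : Prop :=
  S.Nonempty ∧ ∀ i : Fin n, ¬((i, true) ∈ S ∧ (i, false) ∈ S)

/-- `AdS_n`: admissible sets of size `n` (exactly one of `±e i` for each `i`). -/
def AdSn (n : ℕ) (T : Finset (Fin n × Bool)) : Prop :=
  T.card = n ∧ Adm n T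

/-- The simplex `Δ⁰_S := conv({0} ∪ S)`. -/
def simp0 (n : ℕ) (S : Finset (Fin n × Bool)) : Set (Fin n → ℝ) :=
  convexHull ℝ ({0} ∪ sgnVec n '' ↑S)

/-- The lattice points `ℤ^n ⊆ ℝ^n`. -/
def latt (n : ℕ) : Set (Fin n → ℝ) := {x | ∀ j, ∃ z : ℤ, x j = (z : ℝ)}

/-- Minkowski difference `A − B := {x : x + B ⊆ A}`. -/
def mdiff {n : ℕ} (A B : Set (Fin n → ℝ)) : Set (Fin n → ℝ) :=
  {x | ∀ b ∈ B, x + b ∈ A}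

/-- Coordinatewise multiplication by `r` as a linear map. -/
def Lr (n : ℕ) (r : Fin n → ℝ) : (Fin n → ℝ) →ₗ[ℝ] (Fin n → ℝ) where
  toFun v := fun j => r j * v j
  map_add' u v := by funext j; simp [mul_add]
  map_smul' c v := by funext j; simp [smul_eq_mul]; ring

lemma Lr_sgnVec (n : ℕ) (r : Fin n → ℝ) (p : Fin n × Bool) :
    Lr n r (sgnVec n p) = r p.1 • sgnVec n p := by
  funext j
  by_cases h : j = p.1 <;>
    rcases p with ⟨i, b⟩ <;> cases b <;>
      simp_all [Lr, sgnVec, Pi.single_apply]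

lemma Lr_mem_simp0 (n : ℕ) (S : Finset (Fin n × Bool)) (r : Fin n → ℝ)
    (hr : ∀ j, 0 ≤ r j ∧ r j ≤ 1) {v : Fin n → ℝ} (hv : v ∈ simp0 n S) :
    Lr n r v ∈ simp0 n S := by
  have hzero : (0 : Fin n → ℝ) ∈ simp0 n S :=
    subset_convexHull ℝ _ (Set.mem_union_left _ rfl)
  have hsub : Lr n r '' ({0} ∪ sgnVec n '' ↑S) ⊆ simp0 n S := by
    rintro _ ⟨w, hw, rfl⟩
    rcases hw with hw | ⟨p, hp, rfl⟩
    · simp only [Set.mem_singleton_iff] at hw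
      subst hw
      simpa using hzero
    · rw [Lr_sgnVec]
      have hgen : sgnVec n p ∈ simp0 n S :=
        subset_convexHull ℝ _ (Set.mem_union_right _ ⟨p, hp, rfl⟩)
      exact (convex_convexHull ℝ _).smul_mem_of_zero_mem hzero hgen
        ⟨(hr p.1).1, (hr p.1).2⟩
  have : Lr n r v ∈ Lr n r '' simp0 n S := Set.mem_image_of_mem _ hv
  rw [simp0] at this
  rw [(Lr n r).image_convexHull] at this
  exact convexHull_min hsub (convex_convexHull ℝ _) this

/-- If `P = y_1Δ⁰_{S_1} + ⋯ + y_mΔ⁰_{S_m}` with `y_i > 0` real and `S_i` admissible,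
and `(x_1,…,x_n) ∈ P`, then for any `r` with `0 ≤ r_j ≤ 1` the point `(r_1x_1,…,r_nx_n) ∈ P`. -/
theorem stmt1 (n m : ℕ) (y : Fin m → ℝ) (hy : ∀ i, 0 < y i)
    (S : Fin m → Finset (Fin n × Bool)) (hS : ∀ i, Adm n (S i))
    (x : Fin n → ℝ) (hx : x ∈ ∑ i : Fin m, y i • simp0 n (S i))
    (r : Fin n → ℝ) (hr : ∀ j, 0 ≤ r j ∧ r j ≤ 1) :
    (fun j => r j * x j) ∈ ∑ i : Fin m, y i • simp0 n (S i) := by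
  rw [Set.mem_fintype_sum] at hx ⊢
  obtain ⟨g, hg, hgsum⟩ := hx
  refine ⟨fun i => Lr n r (g i), fun i => ?_, ?_⟩
  · obtain ⟨s, hs, hseq⟩ := hg i
    simp only [← hseq, LinearMap.map_smul]
    exact Set.smul_mem_smul_set (Lr_mem_simp0 n (S i) r hr hs)
  · rw [← map_sum, hgsum]; rfl
end
end

section
/- Let P = y_1Δ⁰_{S_1} + ⋯ + y_mΔ⁰_{S_m} ⊂ ℝ^n where y_1,…,y_m are positive real numbers and S_1,…,S_m are admissible sets of signed vectors. Then for every T ∈ AdS_n, the polytope P_T := y_1Δ⁰_{S_1∩T} + ⋯ + y_mΔ⁰_{S_m∩T} equals P ∩ ℝ_T, the intersection of P with the closed octant associated to T. -/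
open Pointwise

noncomputable section

/-- The closed octant `ℝ_T := {x : x·v ≥ 0 for all v ∈ T}` associated to `T ∈ AdS_n`. -/
def octant (n : ℕ) (T : Finset (Fin n × Bool)) : Set (Fin n → ℝ) :=
  {x | ∀ p ∈ T, 0 ≤ ∑ j, x j * sgnVec n p j}

set_option linter.unnecessarySeqFocus false

lemma sgnVec_apply (n : ℕ) (k : Fin n) (b : Bool) (j : Fin n) :
    sgnVec n (k, b) j = (if b then (1:ℝ) else -1) * (if j = k then 1 else 0) := by
  cases b <;> simp [sgnVec, Pi.single_apply] <;> split <;> simp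

lemma dot_sgnVec {n : ℕ} (x : Fin n → ℝ) (k : Fin n) (c : Bool) :
    ∑ j, x j * sgnVec n (k, c) j = (if c then (1:ℝ) else -1) * x k := by
  rw [Finset.sum_eq_single k]
  · rw [sgnVec_apply]; simp [mul_comm]
  · intro j _ h; rw [sgnVec_apply]; simp [h]
  · simp

lemma simp0_mono {n : ℕ} {S S' : Finset (Fin n × Bool)} (h : S ⊆ S') :
    simp0 n S ⊆ simp0 n S' := by
  apply convexHull_mono
  apply Set.union_subset_union_right
  exact Set.image_mono (by exact_mod_cast h)

lemma mem_smulSum {n m : ℕ} (y : Fin m → ℝ) (A : Fin m → Set (Fin n → ℝ)) (x : Fin n → ℝ) :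
    x ∈ ∑ i : Fin m, y i • A i ↔ ∃ f : Fin m → (Fin n → ℝ),
      (∀ i, f i ∈ A i) ∧ ∑ i, y i • f i = x := by
  rw [Set.mem_fintype_sum]
  constructor
  · rintro ⟨g, hg, rfl⟩
    choose f hf hgf using fun i => Set.mem_smul_set.1 (hg i)
    exact ⟨f, hf, by simp [hgf]⟩
  · rintro ⟨f, hf, rfl⟩
    exact ⟨fun i => y i • f i, fun i => Set.smul_mem_smul_set (hf i), rfl⟩

lemma mem_simp0 {n : ℕ} {S : Finset (Fin n × Bool)} (x : Fin n → ℝ) :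
    x ∈ simp0 n S ↔ (∑ j, |x j|) ≤ 1 ∧
      ∀ j, (0 < x j → (j, true) ∈ S) ∧ (x j < 0 → (j, false) ∈ S) := by
  constructor
  · intro hx
    have : simp0 n S ⊆ {x : Fin n → ℝ | (∑ j, |x j|) ≤ 1 ∧
        ∀ j, (0 < x j → (j, true) ∈ S) ∧ (x j < 0 → (j, false) ∈ S)} := by
      apply convexHull_min
      · rintro v (rfl | ⟨p, hp, rfl⟩)
        · simp
        · obtain ⟨k, b⟩ := p
          constructor
          · have : ∀ j, |sgnVec n (k,b) j| = if j = k then 1 else 0 := by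
              intro j; rcases eq_or_ne j k with rfl | h <;> cases b <;> simp [sgnVec_apply, *]
            simp [this]
          · intro j
            constructor <;> intro h <;> rw [sgnVec_apply] at h
            · have : j = k ∧ b = true := by
                by_contra hc
                rcases Decidable.em (j = k) with h1 | h1
                · cases b
                  · simp [h1] at h; linarith
                  · exact hc ⟨h1, rfl⟩
                · simp [h1] at h
              obtain ⟨rfl, rfl⟩ := this; exact hp
            · have : j = k ∧ b = false := by
                by_contra hc
                rcases Decidable.em (j = k) with h1 | h1
                · cases b
                  · exact hc ⟨h1, rfl⟩
                  · simp [h1] at h; linarith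
                · simp [h1] at h
              obtain ⟨rfl, rfl⟩ := this; exact hp
      · rintro u hu v hv a b ha hb hab
        refine ⟨?_, ?_⟩
        · calc (∑ j, |a * u j + b * v j|) ≤ ∑ j, (a * |u j| + b * |v j|) := by
                apply Finset.sum_le_sum
                intro j _
                calc |a * u j + b * v j| ≤ |a * u j| + |b * v j| := abs_add_le _ _
                  _ = a * |u j| + b * |v j| := by
                      rw [abs_mul, abs_mul, abs_of_nonneg ha, abs_of_nonneg hb]
          _ = a * (∑ j, |u j|) + b * (∑ j, |v j|) := by
                rw [Finset.sum_add_distrib, Finset.mul_sum, Finset.mul_sum]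
          _ ≤ a * 1 + b * 1 := by
                gcongr; exacts [hu.1, hv.1]
          _ = 1 := by linarith
        · intro j
          constructor
          · intro h
            simp only [Pi.add_apply, Pi.smul_apply, smul_eq_mul] at h
            rcases lt_or_ge 0 (u j) with h' | h'
            · exact (hu.2 j).1 h'
            rcases lt_or_ge 0 (v j) with h'' | h''
            · exact (hv.2 j).1 h''
            nlinarith
          · intro h
            simp only [Pi.add_apply, Pi.smul_apply, smul_eq_mul] at h
            rcases lt_or_ge (u j) 0 with h' | h'
            · exact (hu.2 j).2 h'
            rcases lt_or_ge (v j) 0 with h'' | h''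
            · exact (hv.2 j).2 h''
            nlinarith
    exact this hx
  · rintro ⟨h1, h2⟩
    classical
    set z : Option (Fin n) → (Fin n → ℝ) := fun o => match o with
      | none => 0
      | some j => if 0 < x j then sgnVec n (j, true) else if x j < 0 then sgnVec n (j, false) else 0
    set w : Option (Fin n) → ℝ := fun o => match o with
      | none => 1 - ∑ j, |x j|
      | some j => |x j|
    have hw : ∀ o ∈ (Finset.univ : Finset (Option (Fin n))), 0 ≤ w o := by
      rintro (_ | j) _
      · simpa [w] using h1
      · simp [w, abs_nonneg]
    have hwsum : ∑ o : Option (Fin n), w o = 1 := by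
      rw [Fintype.sum_option]
      simp [w]
    have hz : ∀ o ∈ (Finset.univ : Finset (Option (Fin n))), z o ∈ ({0} ∪ sgnVec n '' ↑S : Set (Fin n → ℝ)) := by
      rintro (_ | j) _
      · simp [z]
      · simp only [z]
        rcases lt_trichotomy (x j) 0 with h | h | h
        · right; exact ⟨(j, false), (h2 j).2 h, by simp [h, not_lt.2 h.le]⟩
        · left; simp [h]
        · right; exact ⟨(j, true), (h2 j).1 h, by simp [h]⟩
    have hmem := Finset.centerMass_mem_convexHull (Finset.univ : Finset (Option (Fin n))) hw (by rw [hwsum]; norm_num) hz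
    have : (Finset.univ : Finset (Option (Fin n))).centerMass w z = x := by
      rw [Finset.centerMass_eq_of_sum_1 _ _ hwsum]
      rw [Fintype.sum_option]
      simp only [w, z]
      funext k
      simp only [Finset.sum_apply, Pi.add_apply, Pi.smul_apply, smul_eq_mul, Pi.zero_apply]
      rw [show (1 - ∑ j, |x j|) * 0 = 0 by ring, zero_add]
      rw [Finset.sum_eq_single k]
      · rcases lt_trichotomy (x k) 0 with h | h | h
        · simp [h, not_lt.2 h.le, sgnVec_apply, abs_of_neg h]
        · simp [h]
        · simp [h, sgnVec_apply, abs_of_pos h]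
      · intro j _ hjk
        rcases lt_trichotomy (x j) 0 with h | h | h
        · simp [h, not_lt.2 h.le, sgnVec_apply, Ne.symm hjk]
        · simp [h]
        · simp [h, sgnVec_apply, Ne.symm hjk]
      · simp
    rw [this] at hmem
    exact hmem

/-- If `P = y_1Δ⁰_{S_1} + ⋯ + y_mΔ⁰_{S_m}` with `y_i > 0` real and `S_i` admissible,
then for every `T ∈ AdS_n`, `P_T := y_1Δ⁰_{S_1∩T} + ⋯ + y_mΔ⁰_{S_m∩T}` equals `P ∩ ℝ_T`. -/
theorem stmt2 (n m : ℕ) (y : Fin m → ℝ) (hy : ∀ i, 0 < y i)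
    (S : Fin m → Finset (Fin n × Bool)) (hS : ∀ i, Adm n (S i))
    (T : Finset (Fin n × Bool)) (hT : AdSn n T) :
    (∑ i : Fin m, y i • simp0 n (S i ∩ T)) =
      (∑ i : Fin m, y i • simp0 n (S i)) ∩ octant n T := by
  classical
  obtain ⟨hTcard, -, hTadm⟩ : T.card = n ∧ T.Nonempty ∧
      ∀ i : Fin n, ¬((i, true) ∈ T ∧ (i, false) ∈ T) := ⟨hT.1, hT.2.1, hT.2.2⟩
  -- pick the unique sign for each coordinate
  have hinj : Set.InjOn Prod.fst (T : Set (Fin n × Bool)) := by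
    rintro ⟨k, c⟩ hk ⟨k', c'⟩ hk' (h : k = k')
    subst h
    by_contra hne
    apply hTadm k
    cases c <;> cases c' <;> simp_all
  have himg : T.image Prod.fst = Finset.univ := by
    apply Finset.eq_univ_of_card
    rw [Finset.card_image_of_injOn hinj, hTcard, Fintype.card_fin]
  have hbex : ∀ k : Fin n, ∃ c : Bool, (k, c) ∈ T := by
    intro k
    have : k ∈ T.image Prod.fst := by rw [himg]; exact Finset.mem_univ k
    obtain ⟨p, hp, hpk⟩ := Finset.mem_image.1 this
    exact ⟨p.2, by rw [← hpk, Prod.mk.eta]; exact hp⟩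
  choose b hbT using hbex
  have hbu : ∀ k c, (k, c) ∈ T → c = b k := by
    intro k c hc
    by_contra h
    apply hTadm k
    have := hbT k
    cases c <;> cases hb' : b k <;> simp_all
  set s : Fin n → ℝ := fun k => if b k then 1 else -1 with hs
  have hssq : ∀ k, s k * s k = 1 := by
    intro k; rw [hs]; cases hb : b k <;> simp [hb]
  have hoct : ∀ x : Fin n → ℝ, x ∈ octant n T ↔ ∀ k, 0 ≤ s k * x k := by
    intro x
    constructor
    · intro h k
      have := h (k, b k) (hbT k)
      rw [dot_sgnVec] at this
      simpa [hs] using this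
    · rintro h ⟨k, c⟩ hp
      rw [dot_sgnVec]
      obtain rfl := hbu k c hp
      simpa [hs] using h k
  ext x
  constructor
  · -- forward inclusion
    intro hx
    rw [mem_smulSum] at hx
    obtain ⟨f, hf, hfx⟩ := hx
    have hxk : ∀ k, x k = ∑ i, y i * f i k := by
      intro k; rw [← hfx]; simp
    constructor
    · rw [mem_smulSum]
      exact ⟨f, fun i => simp0_mono Finset.inter_subset_left (hf i), hfx⟩
    · rw [hoct]
      intro k
      have hterm : ∀ i, 0 ≤ s k * f i k := by
        intro i
        have hchar := (mem_simp0 (f i)).1 (hf i)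
        rcases lt_trichotomy (f i k) 0 with h | h | h
        · have hmT : (k, false) ∈ T := (Finset.mem_inter.1 (((hchar.2 k).2) h)).2
          have hbk := (hbu k false hmT).symm
          rw [hs]; simp only [hbk]; norm_num; linarith
        · simp [h]
        · have hmT : (k, true) ∈ T := (Finset.mem_inter.1 (((hchar.2 k).1) h)).2
          have hbk := (hbu k true hmT).symm
          rw [hs]; simp only [hbk]; norm_num; linarith
      rw [hxk k, Finset.mul_sum]
      apply Finset.sum_nonneg
      intro i _
      have := mul_nonneg (hy i).le (hterm i)
      nlinarith [hssq k]
  · -- reverse inclusion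
    rintro ⟨hxP, hxO⟩
    rw [mem_smulSum] at hxP ⊢
    obtain ⟨f, hf, hfx⟩ := hxP
    have hxk : ∀ k, x k = ∑ i, y i * f i k := by
      intro k; rw [← hfx]; simp
    have hsx : ∀ k, 0 ≤ s k * x k := (hoct x).1 hxO
    have hchar := fun i => (mem_simp0 (f i)).1 (hf i)
    have hA : ∀ i k, (k, b k) ∈ S i → 0 ≤ s k * f i k := by
      intro i k hm
      rcases lt_trichotomy (f i k) 0 with h | h | h
      · have h2 : (k, false) ∈ S i := ((hchar i).2 k).2 h
        cases hbk : b k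
        · rw [hs]; simp only [hbk]; norm_num; linarith
        · rw [hbk] at hm
          exact absurd ⟨hm, h2⟩ ((hS i).2 k)
      · simp [h]
      · have h2 : (k, true) ∈ S i := ((hchar i).2 k).1 h
        cases hbk : b k
        · rw [hbk] at hm
          exact absurd ⟨h2, hm⟩ ((hS i).2 k)
        · rw [hs]; simp only [hbk]; norm_num; linarith
    have hNA : ∀ i k, (k, b k) ∉ S i → s k * f i k ≤ 0 := by
      intro i k hm
      rcases lt_trichotomy (f i k) 0 with h | h | h
      · cases hbk : b k
        · rw [hbk] at hm
          exact absurd (((hchar i).2 k).2 h) hm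
        · rw [hs]; simp only [hbk]; norm_num; linarith
      · simp [h]
      · cases hbk : b k
        · rw [hs]; simp only [hbk]; norm_num; linarith
        · rw [hbk] at hm
          exact absurd (((hchar i).2 k).1 h) hm
    set P : Fin n → ℝ := fun k => ∑ i, if (k, b k) ∈ S i then y i * (s k * f i k) else 0 with hP
    have hP0 : ∀ k, 0 ≤ P k := by
      intro k
      apply Finset.sum_nonneg
      intro i _
      split
      · exact mul_nonneg (hy i).le (hA i k (by assumption))
      · exact le_rfl
    have hPx : ∀ k, s k * x k ≤ P k := by
      intro k
      rw [hxk k, Finset.mul_sum, hP]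
      apply Finset.sum_le_sum
      intro i _
      split
      · ring_nf; exact le_of_eq (by ring)
      · have := hNA i k (by assumption)
        nlinarith [(hy i).le]
    set c : Fin n → ℝ := fun k => if P k = 0 then 0 else (s k * x k) / P k with hc
    have hc0 : ∀ k, 0 ≤ c k := by
      intro k; rw [hc]; dsimp only
      split
      · exact le_rfl
      · exact div_nonneg (hsx k) (hP0 k)
    have hc1 : ∀ k, c k ≤ 1 := by
      intro k; rw [hc]; dsimp only
      split
      · norm_num
      · rw [div_le_one (lt_of_le_of_ne (hP0 k) (Ne.symm (by assumption)))]
        exact hPx k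
    have hcP : ∀ k, c k * P k = s k * x k := by
      intro k; rw [hc]; dsimp only
      split
      · rename_i h
        rw [h]
        have h1 := hPx k
        have h2 := hsx k
        rw [h] at h1
        linarith
      · field_simp
    set g : Fin m → Fin n → ℝ := fun i k => if (k, b k) ∈ S i then c k * f i k else 0 with hg
    refine ⟨g, ?_, ?_⟩
    · intro i
      rw [mem_simp0]
      constructor
      · calc (∑ k, |g i k|) ≤ ∑ k, |f i k| := by
              apply Finset.sum_le_sum
              intro k _
              rw [hg]; dsimp only
              split
              · rw [abs_mul, abs_of_nonneg (hc0 k)]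
                nlinarith [abs_nonneg (f i k), hc1 k]
              · simp [abs_nonneg]
        _ ≤ 1 := (hchar i).1
      · intro k
        constructor
        · intro hpos
          have hm : (k, b k) ∈ S i := by
            by_contra hm
            rw [hg] at hpos; simp only [hm, if_false] at hpos
            exact lt_irrefl 0 hpos
          have hgik : g i k = c k * f i k := by rw [hg]; simp [hm]
          rw [hgik] at hpos
          have hfk : 0 < f i k := by nlinarith [hc0 k, hc1 k]
          have hkS : (k, true) ∈ S i := ((hchar i).2 k).1 hfk
          have hbk : b k = true := by
            cases hbk : b k
            · have := hA i k hm
              rw [hs] at this; simp only [hbk] at this; norm_num at this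
              linarith
            · rfl
          exact Finset.mem_inter.2 ⟨hkS, by rw [← hbk]; exact hbT k⟩
        · intro hneg
          have hm : (k, b k) ∈ S i := by
            by_contra hm
            rw [hg] at hneg; simp only [hm, if_false] at hneg
            exact lt_irrefl 0 hneg
          have hgik : g i k = c k * f i k := by rw [hg]; simp [hm]
          rw [hgik] at hneg
          have hfk : f i k < 0 := by nlinarith [hc0 k, hc1 k]
          have hkS : (k, false) ∈ S i := ((hchar i).2 k).2 hfk
          have hbk : b k = false := by
            cases hbk : b k
            · rfl
            · have := hA i k hm
              rw [hs] at this; simp only [hbk] at this; norm_num at this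
              linarith
          exact Finset.mem_inter.2 ⟨hkS, by rw [← hbk]; exact hbT k⟩
    · funext k
      have hsum : (∑ i, y i • g i) k = ∑ i, y i * g i k := by simp
      rw [hsum]
      have h1 : ∑ i, y i * g i k = c k * ∑ i, if (k, b k) ∈ S i then y i * f i k else 0 := by
        rw [Finset.mul_sum]
        apply Finset.sum_congr rfl
        intro i _
        rw [hg]; dsimp only
        split <;> ring
      have h2 : (∑ i, if (k, b k) ∈ S i then y i * f i k else 0) = s k * P k := by
        rw [hP, Finset.mul_sum]
        apply Finset.sum_congr rfl
        intro i _
        by_cases hmem : (k, b k) ∈ S i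
        · simp only [hmem, if_true]
          linear_combination (-(y i * f i k)) * hssq k
        · simp [hmem]
      rw [h1, h2]
      linear_combination (s k) * hcP k + (x k) * hssq k
end
end

section
/- Let T ∈ AdS_n and P = y_1Δ⁰_{S_1} + ⋯ + y_mΔ⁰_{S_m} ⊂ ℝ^n where y_1,…,y_m are positive integers and S_1,…,S_m are admissible sets of signed vectors. For each i let I_i := {0} ∪ {j ∈ [n] : e_j ∈ T and e_j ∈ S_i, or −e_j ∈ T and −e_j ∈ S_i} ⊆ {0,1,…,n}, and let Q_T := y_1Δ_{I_1} + ⋯ + y_mΔ_{I_m} ⊂ ℝ^{{0,1,…,n}}, where Δ_I := conv(f_j : j ∈ I) with f_0, f_1,…,f_n the standard basis of ℝ^{{0,1,…,n}}. Define the linear projection φ_T : ℝ^{{0,1,…,n}} → ℝ^n by φ_T(x_0,x_1,…,x_n) := Σ_{v ∈ T} x_{i(v)} v, where i(±e_j) := j. Then φ_T maps Q_T onto P_T := y_1Δ⁰_{S_1∩T} + ⋯ + y_mΔ⁰_{S_m∩T}, φ_T is injective on the affine hull of Q_T, and φ_T restricts to a bijection from the lattice points Q_T ∩ ℤ^{{0,1,…,n}}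 onto the lattice points P_T ∩ ℤ^n. In particular, P_T is integrally equivalent to the type A generalized permutohedron Q_T. -/
open Pointwise

noncomputable section

/-- The simplex `Δ_I := conv(f_j : j ∈ I)` in `ℝ^N` on the standard basis vectors indexed by `I`. -/
def simpA (N : ℕ) (I : Finset (Fin N)) : Set (Fin N → ℝ) :=
  convexHull ℝ ((fun j => Pi.single j (1 : ℝ)) '' ↑I)

/-- The linear projection `φ_T : ℝ^{0,1,…,n} → ℝ^n`, `φ_T(x) = Σ_{v ∈ T} x_{i(v)} v`,
where `i(±e_j) := j` (the index `j ∈ [n]` corresponds to `j.succ : Fin (n+1)`,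
and `0 : Fin (n+1)` is the extra coordinate). -/
def phiT (n : ℕ) (T : Finset (Fin n × Bool)) (x : Fin (n + 1) → ℝ) : Fin n → ℝ :=
  ∑ p ∈ T, x p.1.succ • sgnVec n p

/- ------------------ auxiliary lemmas ------------------ -/

def sumCoord (N : ℕ) : (Fin N → ℝ) →ₗ[ℝ] ℝ := ∑ j, LinearMap.proj j

lemma sumCoord_apply {N : ℕ} (x : Fin N → ℝ) : sumCoord N x = ∑ j, x j := by
  simp [sumCoord]

def phiL (n : ℕ) (T : Finset (Fin n × Bool)) : (Fin (n + 1) → ℝ) →ₗ[ℝ] (Fin n → ℝ) where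
  toFun := phiT n T
  map_add' x y := by
    simp only [phiT, Pi.add_apply, add_smul, Finset.sum_add_distrib]
  map_smul' c x := by
    simp only [phiT, Pi.smul_apply, smul_eq_mul, mul_smul, Finset.smul_sum, RingHom.id_apply]

lemma image_sum {ι V W : Type*} [AddCommMonoid V] [AddCommMonoid W]
    [Module ℝ V] [Module ℝ W] (f : V →ₗ[ℝ] W) (s : Finset ι) (A : ι → Set V) :
    f '' (∑ i ∈ s, A i) = ∑ i ∈ s, f '' A i := by
  induction s using Finset.cons_induction with
  | empty => simp [Set.singleton_zero]
  | cons a s ha ih => rw [Finset.sum_cons, Finset.sum_cons, Set.image_add, ih]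

lemma sum_subset_hyper {ι V : Type*} [AddCommGroup V] [Module ℝ V] (f : V →ₗ[ℝ] ℝ)
    (s : Finset ι) (A : ι → Set V) (c : ι → ℝ) (h : ∀ i ∈ s, A i ⊆ {x | f x = c i}) :
    (∑ i ∈ s, A i) ⊆ {x | f x = ∑ i ∈ s, c i} := by
  induction s using Finset.cons_induction with
  | empty => intro x hx; simp only [Finset.sum_empty, Set.mem_zero] at hx ⊢; simp [hx]
  | cons a s ha ih =>
    intro x hx
    rw [Finset.sum_cons] at hx
    obtain ⟨u, hu, v, hv, rfl⟩ := Set.mem_add.mp hx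
    have h2 := ih (fun i hi => h i (Finset.mem_cons_of_mem hi)) hv
    have h1 := h a (Finset.mem_cons_self a s) hu
    simp only [Set.mem_setOf_eq] at h1 h2 ⊢
    rw [map_add, h1, h2, Finset.sum_cons]

def hyper (N : ℕ) (Y : ℝ) : AffineSubspace ℝ (Fin N → ℝ) where
  carrier := {x | sumCoord N x = Y}
  smul_vsub_vadd_mem' := by
    intro c p₁ p₂ p₃ h1 h2 h3
    simp only [Set.mem_setOf_eq] at h1 h2 h3 ⊢
    rw [vsub_eq_sub, vadd_eq_add, map_add, map_smul, map_sub, h1, h2, h3]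
    simp


/-- For `T ∈ AdS_n` and `P = y_1Δ⁰_{S_1} + ⋯ + y_mΔ⁰_{S_m}` with `y_i` positive
integers and `S_i` admissible, letting `I_i := {0} ∪ {j : ±e_j ∈ S_i ∩ T}` and
`Q_T := y_1Δ_{I_1} + ⋯ + y_mΔ_{I_m} ⊆ ℝ^{0,…,n}`, the projection `φ_T` maps `Q_T` onto
`P_T := y_1Δ⁰_{S_1∩T} + ⋯ + y_mΔ⁰_{S_m∩T}`, is injective on the affine hull of `Q_T`, and
restricts to a bijection between the lattice points of `Q_T` and those of `P_T`; in particular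
`P_T` is integrally equivalent to the type A generalized permutohedron `Q_T`. -/
theorem stmt3 (n m : ℕ) (T : Finset (Fin n × Bool)) (hT : AdSn n T)
    (y : Fin m → ℕ) (hy : ∀ i, 0 < y i)
    (S : Fin m → Finset (Fin n × Bool)) (hS : ∀ i, Adm n (S i))
    (I : Fin m → Finset (Fin (n + 1)))
    (hI : ∀ i, I i = insert 0 ((S i ∩ T).image fun p => p.1.succ))
    (QT : Set (Fin (n + 1) → ℝ)) (hQT : QT = ∑ i : Fin m, (y i : ℝ) • simpA (n + 1) (I i))
    (PT : Set (Fin n → ℝ)) (hPT : PT = ∑ i : Fin m, (y i : ℝ) • simp0 n (S i ∩ T)) :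
    phiT n T '' QT = PT ∧
    Set.InjOn (phiT n T) (affineSpan ℝ QT : Set (Fin (n + 1) → ℝ)) ∧
    Set.BijOn (phiT n T) (QT ∩ latt (n + 1)) (PT ∩ latt n) := by
  obtain ⟨hTcard, -, hTadm⟩ := hT
  -- the first projection is injective on T
  have hfst : Set.InjOn Prod.fst (T : Set (Fin n × Bool)) := by
    rintro ⟨a, b⟩ hp ⟨c, d⟩ hq hpq
    simp only [Finset.mem_coe] at hp hq
    have hac : a = c := hpq
    subst hac
    cases b <;> cases d
    · rfl
    · exact absurd ⟨hq, hp⟩ (hTadm a)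
    · exact absurd ⟨hp, hq⟩ (hTadm a)
    · rfl
  -- every index appears in T
  have hTuniv : T.image Prod.fst = Finset.univ := by
    apply Finset.eq_univ_of_card
    rw [Finset.card_image_of_injOn hfst, hTcard, Fintype.card_fin]
  have hexists : ∀ j : Fin n, ∃ b, (j, b) ∈ T := by
    intro j
    have : j ∈ T.image Prod.fst := by rw [hTuniv]; exact Finset.mem_univ j
    obtain ⟨p, hp, hpj⟩ := Finset.mem_image.mp this
    exact ⟨p.2, by rwa [← hpj, Prod.mk.eta]⟩
  choose ε hε using hexists
  have huniq : ∀ p ∈ T, p.2 = ε p.1 := by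
    intro p hp
    have := hfst hp (hε p.1) rfl
    exact congrArg Prod.snd this
  -- coordinate formula for phiT
  have hcoord : ∀ (x : Fin (n + 1) → ℝ) (j : Fin n),
      phiT n T x j = (if ε j then (1:ℝ) else -1) * x j.succ := by
    intro x j
    have : phiT n T x j = ∑ p ∈ T, x p.1.succ * sgnVec n p j := by
      simp [phiT, Finset.sum_apply]
    rw [this, Finset.sum_eq_single_of_mem (j, ε j) (hε j)]
    · simp only [sgnVec]
      rcases Bool.eq_false_or_eq_true (ε j) with h | h <;>
        simp [h, Pi.single_eq_same, mul_comm]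
    · intro p hp hne
      have hj : p.1 ≠ j := by
        intro hj
        apply hne
        have : p = (p.1, ε p.1) := Prod.ext rfl (huniq p hp)
        rw [this, hj]
      have : sgnVec n p j = 0 := by
        rcases Bool.eq_false_or_eq_true p.2 with h | h <;>
          simp [sgnVec, h, Pi.single_eq_of_ne (Ne.symm hj)]
      rw [this, mul_zero]
  have hsgn_ne : ∀ j : Fin n, (if ε j then (1:ℝ) else -1) ≠ 0 := by
    intro j; rcases Bool.eq_false_or_eq_true (ε j) with h | h <;> simp [h]
  -- images of the vertices
  have hphi0 : phiL n T (Pi.single 0 1) = 0 := by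
    show phiT n T (Pi.single 0 1) = 0
    apply Finset.sum_eq_zero
    intro p hp
    rw [Pi.single_eq_of_ne (Fin.succ_ne_zero p.1), zero_smul]
  have hphiv : ∀ p ∈ T, phiL n T (Pi.single p.1.succ 1) = sgnVec n p := by
    intro p hp
    show phiT n T (Pi.single p.1.succ 1) = sgnVec n p
    rw [phiT, Finset.sum_eq_single_of_mem p hp]
    · rw [Pi.single_eq_same, one_smul]
    · intro q hq hne
      have : q.1.succ ≠ p.1.succ := by
        intro h
        apply hne
        have h1 : q.1 = p.1 := Fin.succ_injective n h
        exact Prod.ext h1 ((huniq q hq).trans ((congrArg ε h1).trans (huniq p hp).symm))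
      rw [Pi.single_eq_of_ne this, zero_smul]
  -- image of each scaled simplex
  have hsimp : ∀ i, phiL n T '' ((y i : ℝ) • simpA (n + 1) (I i))
      = (y i : ℝ) • simp0 n (S i ∩ T) := by
    intro i
    rw [image_smul_set, simpA, LinearMap.image_convexHull, simp0]
    congr 1
    rw [hI i, Finset.coe_insert, Finset.coe_image, Set.image_insert_eq,
      Set.image_insert_eq, hphi0, Set.image_image, Set.image_image,
      Set.singleton_union]
    congr 1
    congr 1
    apply Set.image_congr
    intro p hp
    exact hphiv p (Finset.mem_of_mem_inter_right (by exact_mod_cast hp))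
  have hphi_eq : phiT n T = ⇑(phiL n T) := rfl
  -- image statement
  have himage : phiT n T '' QT = PT := by
    rw [hQT, hPT, hphi_eq, image_sum]
    exact Finset.sum_congr rfl fun i _ => hsimp i
  -- the hyperplane
  set Y : ℝ := ∑ i : Fin m, (y i : ℝ) with hY
  have hQsub : QT ⊆ {x | sumCoord (n + 1) x = Y} := by
    rw [hQT]
    apply sum_subset_hyper _ _ _ (fun i => (y i : ℝ))
    intro i _
    intro x hx
    obtain ⟨a, ha, rfl⟩ := Set.mem_smul_set.mp hx
    have ha1 : sumCoord (n + 1) a = 1 := by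
      have : simpA (n + 1) (I i) ⊆ {x | sumCoord (n + 1) x = 1} := by
        apply convexHull_min
        · rintro _ ⟨j, hj, rfl⟩
          simp [sumCoord_apply, Pi.single_apply]
        · exact convex_hyperplane (sumCoord (n + 1)).isLinear 1
      exact this ha
    simp only [Set.mem_setOf_eq, map_smul, smul_eq_mul, ha1, mul_one]
  -- injectivity on the hyperplane
  have hinj : Set.InjOn (phiT n T) {x | sumCoord (n + 1) x = Y} := by
    intro x hx x' hx' h
    have hsucc : ∀ j : Fin n, x j.succ = x' j.succ := by
      intro j
      have := congrFun h j
      rw [hcoord, hcoord] at this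
      exact mul_left_cancel₀ (hsgn_ne j) this
    funext k
    refine Fin.cases ?_ (fun j => hsucc j) k
    have hx0 := hx; have hx'0 := hx'
    simp only [Set.mem_setOf_eq, sumCoord_apply, Fin.sum_univ_succ] at hx0 hx'0
    have : ∑ j : Fin n, x j.succ = ∑ j : Fin n, x' j.succ :=
      Finset.sum_congr rfl fun j _ => hsucc j
    linarith [hx0, hx'0]
  refine ⟨himage, ?_, ?_⟩
  · -- injectivity on the affine span
    have hspan : affineSpan ℝ QT ≤ hyper (n + 1) Y :=
      (affineSpan_le (Q := hyper (n + 1) Y)).mpr (fun x hx => hQsub hx)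
    exact hinj.mono hspan
  · refine ⟨?_, ?_, ?_⟩
    · -- maps to
      rintro x ⟨hxQ, hxL⟩
      refine ⟨himage ▸ Set.mem_image_of_mem _ hxQ, ?_⟩
      intro j
      obtain ⟨z, hz⟩ := hxL j.succ
      refine ⟨if ε j then z else -z, ?_⟩
      rw [hcoord, hz]
      rcases Bool.eq_false_or_eq_true (ε j) with h | h <;> simp [h, neg_one_mul]
    · -- inj on
      exact hinj.mono (Set.Subset.trans Set.inter_subset_left hQsub)
    · -- surj on
      rintro q ⟨hqP, hqL⟩
      rw [← himage] at hqP
      obtain ⟨x, hxQ, rfl⟩ := hqP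
      refine ⟨x, ⟨hxQ, ?_⟩, rfl⟩
      choose z hz using hqL
      have hxsucc : ∀ j : Fin n, x j.succ = ((if ε j then z j else -z j : ℤ) : ℝ) := by
        intro j
        have h1 := hcoord x j
        rw [hz j] at h1
        rcases Bool.eq_false_or_eq_true (ε j) with h | h
        · rw [h] at h1 ⊢
          rw [if_pos rfl] at h1 ⊢
          rw [one_mul] at h1
          exact h1.symm
        · rw [h] at h1 ⊢
          rw [if_neg (by simp)] at h1
          rw [if_neg (by simp)]
          push_cast
          linarith
      intro k
      induction k using Fin.cases with
      | succ j => exact ⟨_, hxsucc j⟩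
      | zero => ?_
      have hsum : sumCoord (n + 1) x = Y := hQsub hxQ
      rw [sumCoord_apply, Fin.sum_univ_succ] at hsum
      refine ⟨(∑ i : Fin m, (y i : ℤ)) - ∑ j : Fin n, (if ε j then z j else -z j), ?_⟩
      have h2 : ∑ j : Fin n, x j.succ
          = ((∑ j : Fin n, (if ε j then z j else -z j) : ℤ) : ℝ) := by
        rw [Int.cast_sum]
        exact Finset.sum_congr rfl fun j _ => hxsucc j
      have hYc : Y = ((∑ i : Fin m, (y i : ℤ) : ℤ) : ℝ) := by rw [hY]; push_cast; rfl
      have hx0 : x 0 = Y - ∑ j : Fin n, x j.succ := by linarith [hsum]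
      rw [hx0, h2, hYc]
      push_cast
      ring
end
end

section
/- Let S_1,…,S_m be admissible sets of signed vectors in ℝ^n, let T ∈ AdS_n, and suppose the polytope P_T := Δ⁰_{S_1∩T} + ⋯ + Δ⁰_{S_m∩T} is n-dimensional. Let Π := conv(E_1) + ⋯ + conv(E_m) be a fine mixed cell of P_T, that is, each E_i is a nonempty subset of {0} ∪ (S_i ∩ T), Σ_{i=1}^m (|E_i| − 1) = n, and Π is n-dimensional. Then for every nonzero integer vector y ∈ ℤ^n, the interiors of Π and y + Π are disjoint. -/
open Pointwise

noncomputable section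

/-- Vertices of the summands of fine mixed cells: `none ↦ 0`, `some p ↦ ±e_i`. -/
def vec0 (n : ℕ) : Option (Fin n × Bool) → (Fin n → ℝ)
  | none => 0
  | some p => sgnVec n p

/-! ### Auxiliary definitions -/

def epsZ (n : ℕ) (T : Finset (Fin n × Bool)) (j : Fin n) : ℤ :=
  if (j, true) ∈ T then 1 else -1

def epsR (n : ℕ) (T : Finset (Fin n × Bool)) (j : Fin n) : ℝ :=
  ((epsZ n T j : ℤ) : ℝ)

def labE (n : ℕ) : Option (Fin n × Bool) → Option (Fin n) := Option.map Prod.fst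

def linA (n : ℕ) (T : Finset (Fin n × Bool)) (A : Finset (Fin n)) :
    (Fin n → ℝ) →ₗ[ℝ] ℝ :=
  ∑ j ∈ A, epsR n T j • (LinearMap.proj j : ((Fin n → ℝ)) →ₗ[ℝ] ℝ)

lemma epsR_sq (n : ℕ) (T : Finset (Fin n × Bool)) (j : Fin n) :
    epsR n T j * epsR n T j = 1 := by
  unfold epsR epsZ
  split_ifs <;> norm_num

lemma linA_single (n : ℕ) (T : Finset (Fin n × Bool)) (A : Finset (Fin n))
    (k : Fin n) (c : ℝ) :
    linA n T A (Pi.single k c) = if k ∈ A then epsR n T k * c else 0 := by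
  unfold linA
  simp only [LinearMap.coe_sum, Finset.sum_apply, LinearMap.smul_apply,
    LinearMap.proj_apply, smul_eq_mul]
  rw [Finset.sum_congr rfl (fun j _ => by rw [Pi.single_apply, mul_ite, mul_zero])]
  rw [Finset.sum_ite_eq' A k (fun j => epsR n T j * c)]

lemma sgn_eps (n : ℕ) (T : Finset (Fin n × Bool)) (hadm : Adm n T) :
    ∀ q ∈ T, sgnVec n q = epsR n T q.1 • (Pi.single q.1 1 : Fin n → ℝ) := by
  rintro ⟨j, b⟩ hq
  cases b
  · have hnt : (j, true) ∉ T := fun h => hadm.2 j ⟨h, hq⟩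
    simp [sgnVec, epsR, epsZ, hnt]
  · simp [sgnVec, epsR, epsZ, hq]

lemma linA_vec (n : ℕ) (T : Finset (Fin n × Bool)) (hadm : Adm n T) (A : Finset (Fin n))
    (q : Fin n × Bool) (hq : q ∈ T) :
    linA n T A (vec0 n (some q)) = if q.1 ∈ A then (1 : ℝ) else 0 := by
  have : vec0 n (some q) = sgnVec n q := rfl
  rw [this, sgn_eps n T hadm q hq, map_smul, smul_eq_mul, linA_single, mul_ite, mul_zero]
  split_ifs with h
  · rw [mul_one]
    exact epsR_sq n T q.1
  · rfl


set_option linter.unusedSectionVars false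

section Comb
variable {ι J : Type*} [DecidableEq ι] [DecidableEq J]

lemma count_swap (I : Finset ι) (U : Finset J) (V : ι → Finset J) (H0 : ∀ i ∈ I, V i ⊆ U)
    (G : J → Prop) [DecidablePred G] :
    ∑ i ∈ I, ((V i).filter G).card
      = ∑ v ∈ U.filter G, (I.filter (fun i => v ∈ V i)).card := by
  have key : ∀ i ∈ I, ((V i).filter G).card = ∑ v ∈ U, if v ∈ V i ∧ G v then 1 else 0 := by
    intro i hi
    rw [Finset.card_filter]
    rw [show (∑ v ∈ U, if v ∈ V i ∧ G v then 1 else 0)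
        = ∑ v ∈ U.filter (· ∈ V i), if G v then 1 else 0 by
      rw [Finset.sum_filter]
      exact Finset.sum_congr rfl fun v _ => by by_cases h1 : v ∈ V i <;> simp [h1]]
    congr 1
    rw [Finset.filter_mem_eq_inter, Finset.inter_eq_right.mpr (H0 i hi)]
  rw [Finset.sum_congr rfl key, Finset.sum_comm, Finset.sum_filter]
  refine Finset.sum_congr rfl fun v _ => ?_
  by_cases hG : G v
  · rw [if_pos hG, Finset.card_filter]
    exact Finset.sum_congr rfl fun i _ => by simp [hG]
  · rw [if_neg hG]
    exact Finset.sum_eq_zero fun i _ => by simp [hG]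

lemma leaf_exists (I : Finset ι) (U : Finset J) (r : J) (V : ι → Finset J)
    (hI : I.Nonempty) (hr : r ∈ U)
    (H0 : ∀ i ∈ I, V i ⊆ U) (H1 : ∀ i ∈ I, (V i).Nonempty)
    (H2 : ∑ i ∈ I, ((V i).card - 1) = U.card - 1)
    (H3 : ∀ B ⊆ U, r ∉ B → (∀ i ∈ I, V i ⊆ B ∨ V i ∩ B = ∅) → B = ∅) :
    ∃ i0 ∈ I, ∃ c ∈ V i0, ∀ v ∈ V i0, v ≠ c → v ≠ r ∧ ∀ i ∈ I, i ≠ i0 → v ∉ V i := by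
  classical
  haveI : Nonempty J := ⟨r⟩
  by_contra hno
  push_neg at hno
  -- hno : ∀ i0 ∈ I, ∀ c ∈ V i0, ∃ v ∈ V i0, v ≠ c ∧ (v ≠ r → ∃ i ∈ I, i ≠ i0 ∧ v ∈ V i)
  set d : J → ℕ := fun v => (I.filter (fun i => v ∈ V i)).card with hd
  have hshare : ∀ i0 ∈ I, ∀ v ∈ V i0, (∃ i ∈ I, i ≠ i0 ∧ v ∈ V i) → 2 ≤ d v := by
    rintro i0 h0 v hv ⟨i, hiI, hine, hvi⟩
    refine Finset.one_lt_card.mpr ⟨i0, ?_, i, ?_, fun h => hine (h.symm)⟩ <;>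
      simp [hd, h0, hv, hiI, hvi, Finset.mem_filter]
  set G : J → Prop := fun v => v = r ∨ 2 ≤ d v with hG
  have hG2 : ∀ i ∈ I, 2 ≤ ((V i).filter G).card := by
    intro i hi
    by_contra hlt
    push_neg at hlt
    have hle : ((V i).filter G).card ≤ 1 := by omega
    obtain ⟨x, hx⟩ := Finset.card_le_one_iff_subset_singleton.mp hle
    have hgood : ∀ v ∈ V i, v ≠ x → ¬ G v := by
      intro v hv hvx hGv
      exact hvx (Finset.mem_singleton.mp (hx (Finset.mem_filter.mpr ⟨hv, hGv⟩)))
    by_cases hxV : x ∈ V i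
    · obtain ⟨v, hvV, hvc, hvor⟩ := hno i hi x hxV
      refine hgood v hvV hvc ?_
      rcases eq_or_ne v r with rfl | hvr
      · exact Or.inl rfl
      · exact Or.inr (hshare i hi v hvV (hvor hvr))
    · obtain ⟨c, hc⟩ := H1 i hi
      obtain ⟨v, hvV, hvc, hvor⟩ := hno i hi c hc
      have hvx : v ≠ x := fun h => hxV (h ▸ hvV)
      refine hgood v hvV hvx ?_
      rcases eq_or_ne v r with rfl | hvr
      · exact Or.inl rfl
      · exact Or.inr (hshare i hi v hvV (hvor hvr))
  have hdpos : ∀ v ∈ U, v ≠ r → 1 ≤ d v := by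
    intro v hv hvr
    by_contra h
    push_neg at h
    have h0 : ∀ i ∈ I, v ∉ V i := by
      intro i hi hvi
      have : i ∈ I.filter (fun i => v ∈ V i) := Finset.mem_filter.mpr ⟨hi, hvi⟩
      have := Finset.card_pos.mpr ⟨i, this⟩
      simp only [hd] at h
      omega
    have := H3 {v} (Finset.singleton_subset_iff.mpr hv)
      (by simp [Ne.symm hvr])
      (fun i hi => Or.inr (Finset.inter_singleton_of_notMem (h0 i hi)))
    simp at this
  set P := U.filter (fun v => v ≠ r ∧ d v = 1) with hP
  set Q := U.filter (fun v => v ≠ r ∧ 2 ≤ d v) with hQ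
  have hUpart : U = insert r (P ∪ Q) := by
    ext v
    simp only [Finset.mem_insert, Finset.mem_union, hP, hQ, Finset.mem_filter]
    constructor
    · intro hv
      rcases eq_or_ne v r with rfl | hne
      · exact Or.inl rfl
      · have := hdpos v hv hne
        rcases Nat.lt_or_ge (d v) 2 with h | h
        · exact Or.inr (Or.inl ⟨hv, hne, by omega⟩)
        · exact Or.inr (Or.inr ⟨hv, hne, h⟩)
    · rintro (rfl | ⟨h, _⟩ | ⟨h, _⟩) <;> first | exact hr | exact h
  have hrPQ : r ∉ P ∪ Q := by simp [hP, hQ]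
  have hPQdisj : Disjoint P Q := by
    rw [Finset.disjoint_left]
    intro v h1 h2
    rw [hP, Finset.mem_filter] at h1
    rw [hQ, Finset.mem_filter] at h2
    omega
  have hcardU : U.card = 1 + P.card + Q.card := by
    rw [hUpart, Finset.card_insert_of_notMem hrPQ, Finset.card_union_of_disjoint hPQdisj]
    omega
  have hsum1 : ∑ v ∈ U, d v = ∑ i ∈ I, (V i).card := by
    have := count_swap I U V H0 (fun _ => True)
    simpa [Finset.filter_true] using this.symm
  have hsum2 : ∑ i ∈ I, ((V i).filter G).card = d r + ∑ v ∈ Q, d v := by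
    rw [count_swap I U V H0 G]
    have hfG : U.filter G = insert r Q := by
      ext v
      simp only [Finset.mem_filter, Finset.mem_insert, hQ, hG]
      constructor
      · rintro ⟨hvU, rfl | h2⟩
        · exact Or.inl rfl
        · rcases eq_or_ne v r with rfl | hne
          · exact Or.inl rfl
          · exact Or.inr ⟨hvU, hne, h2⟩
      · rintro (rfl | ⟨h1, _, h3⟩)
        · exact ⟨hr, Or.inl rfl⟩
        · exact ⟨h1, Or.inr h3⟩
    rw [hfG, Finset.sum_insert (by simp [hQ])]
  have hPsum : ∑ v ∈ P, d v = P.card := by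
    rw [Finset.card_eq_sum_ones]
    refine Finset.sum_congr rfl fun v hv => ?_
    rw [hP, Finset.mem_filter] at hv
    exact hv.2.2
  have hQsum : 2 * Q.card ≤ ∑ v ∈ Q, d v := by
    calc 2 * Q.card = ∑ _v ∈ Q, 2 := by rw [Finset.sum_const, smul_eq_mul, mul_comm]
    _ ≤ ∑ v ∈ Q, d v := Finset.sum_le_sum fun v hv => (Finset.mem_filter.mp hv).2.2
  have hVsum : ∑ i ∈ I, (V i).card = (U.card - 1) + I.card := by
    have h : ∀ i ∈ I, (V i).card = ((V i).card - 1) + 1 := fun i hi =>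
      (Nat.succ_pred_eq_of_pos (Finset.card_pos.mpr (H1 i hi))).symm
    rw [Finset.sum_congr rfl h, Finset.sum_add_distrib, Finset.sum_const, H2]
    simp [mul_one]
  have hsplit : ∑ v ∈ U, d v = d r + ((∑ v ∈ P, d v) + ∑ v ∈ Q, d v) := by
    rw [hUpart, Finset.sum_insert hrPQ, Finset.sum_union hPQdisj]
  have hnoleaf : 2 * I.card ≤ ∑ i ∈ I, ((V i).filter G).card := by
    calc 2 * I.card = ∑ _i ∈ I, 2 := by rw [Finset.sum_const, smul_eq_mul, mul_comm]
    _ ≤ _ := Finset.sum_le_sum hG2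
  have hI1 : 1 ≤ I.card := Finset.card_pos.mpr hI
  have hU1 : 1 ≤ U.card := Finset.card_pos.mpr ⟨r, hr⟩
  have hdr : d r = 0 := by omega
  have hrV : ∀ i ∈ I, r ∉ V i := by
    intro i hi hri
    have : i ∈ I.filter (fun i => r ∈ V i) := Finset.mem_filter.mpr ⟨hi, hri⟩
    have := Finset.card_pos.mpr ⟨i, this⟩
    simp only [hd] at hdr
    omega
  have hUe := H3 (U.erase r) (Finset.erase_subset _ _) (Finset.notMem_erase _ _)
    (fun i hi => Or.inl (fun v hv => Finset.mem_erase.mpr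
      ⟨fun h => hrV i hi (h ▸ hv), H0 i hi hv⟩))
  obtain ⟨i, hi⟩ := hI
  obtain ⟨v, hv⟩ := H1 i hi
  have hvU : v ∈ U := H0 i hi hv
  have hvr : v = r := by
    by_contra hne
    have : v ∈ U.erase r := Finset.mem_erase.mpr ⟨hne, hvU⟩
    rw [hUe] at this
    simp at this
  exact hrV i hi (hvr ▸ hv)

end Comb

section Core
variable {ι J : Type*} [DecidableEq ι] [DecidableEq J]

lemma core_base (I : Finset ι) (U : Finset J) (r : J) (V : ι → Finset J) (z : J → ℤ)
    (hIe : I = ∅) (hr : r ∈ U)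
    (H2 : ∑ i ∈ I, ((V i).card - 1) = U.card - 1)
    (hz : ∃ j ∈ U, j ≠ r ∧ z j ≠ 0) :
    False := by
  subst hIe
  simp only [Finset.sum_empty] at H2
  have hU1 : 1 ≤ U.card := Finset.card_pos.mpr ⟨r, hr⟩
  have : U.card = 1 := by omega
  obtain ⟨a, ha⟩ := Finset.card_eq_one.mp this
  obtain ⟨j, hjU, hjr, _⟩ := hz
  rw [ha] at hjU hr
  exact hjr ((Finset.mem_singleton.mp hjU).trans (Finset.mem_singleton.mp hr).symm)

lemma core_lemma (r : J) (V : ι → Finset J) (z : J → ℤ) :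
    ∀ (k : ℕ) (I : Finset ι) (U : Finset J), I.card ≤ k → r ∈ U →
    (∀ i ∈ I, V i ⊆ U) → (∀ i ∈ I, (V i).Nonempty) →
    (∑ i ∈ I, ((V i).card - 1) = U.card - 1) →
    (∀ B ⊆ U, r ∉ B → (∀ i ∈ I, V i ⊆ B ∨ V i ∩ B = ∅) → B = ∅) →
    (∃ j ∈ U, j ≠ r ∧ z j ≠ 0) →
    ∃ B ⊆ U, r ∉ B ∧
      (∀ i1 ∈ I, ∀ i2 ∈ I,
        ((V i1 ∩ B).Nonempty ∧ ¬ V i1 ⊆ B) → ((V i2 ∩ B).Nonempty ∧ ¬ V i2 ⊆ B) → i1 = i2) ∧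
      ∑ j ∈ B, z j ≠ 0 := by
  intro k
  induction k with
  | zero =>
    intro I U hk hr H0 H1 H2 H3 hz
    exact absurd (core_base I U r V z (Finset.card_eq_zero.mp (Nat.le_zero.mp hk)) hr H2 hz)
      (fun h => h)
  | succ k IH =>
    intro I U hk hr H0 H1 H2 H3 hz
    rcases I.eq_empty_or_nonempty with rfl | hI
    · exact absurd (core_base ∅ U r V z rfl hr H2 hz) (fun h => h)
    obtain ⟨i0, hi0, c, hc, hleaf⟩ := leaf_exists I U r V hI hr H0 H1 H2 H3
    set priv := (V i0).erase c with hprivdef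
    set U' := U \ priv with hU'def
    set I' := I.erase i0 with hI'def
    have hprivV : priv ⊆ V i0 := Finset.erase_subset _ _
    have hprivU : priv ⊆ U := hprivV.trans (H0 i0 hi0)
    have hrpriv : r ∉ priv := fun h =>
      (hleaf _ (hprivV h) (Finset.ne_of_mem_erase h)).1 rfl
    have hprivother : ∀ i ∈ I, i ≠ i0 → ∀ v ∈ priv, v ∉ V i := fun i hi hne v hv =>
      (hleaf v (hprivV hv) (Finset.ne_of_mem_erase hv)).2 i hi hne
    have hrU' : r ∈ U' := Finset.mem_sdiff.mpr ⟨hr, hrpriv⟩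
    have H0' : ∀ i ∈ I', V i ⊆ U' := fun i hi v hv => Finset.mem_sdiff.mpr
      ⟨H0 i (Finset.mem_of_mem_erase hi) hv,
       fun hp => hprivother i (Finset.mem_of_mem_erase hi) (Finset.ne_of_mem_erase hi) v hp hv⟩
    have H1' : ∀ i ∈ I', (V i).Nonempty := fun i hi => H1 i (Finset.mem_of_mem_erase hi)
    have h1 : priv.card = (V i0).card - 1 := Finset.card_erase_of_mem hc
    have h2 : 1 ≤ (V i0).card := Finset.card_pos.mpr (H1 i0 hi0)
    have hU'c : U'.card = U.card - priv.card := Finset.card_sdiff_of_subset hprivU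
    have hUc : priv.card + 1 ≤ U.card := by
      have hins : insert r priv ⊆ U := Finset.insert_subset_iff.mpr ⟨hr, hprivU⟩
      have := Finset.card_le_card hins
      rw [Finset.card_insert_of_notMem hrpriv] at this
      omega
    have hsum' : (∑ i ∈ I', ((V i).card - 1)) + ((V i0).card - 1)
        = ∑ i ∈ I, ((V i).card - 1) := Finset.sum_erase_add I _ hi0
    have H2' : ∑ i ∈ I', ((V i).card - 1) = U'.card - 1 := by omega
    have H3' : ∀ B ⊆ U', r ∉ B → (∀ i ∈ I', V i ⊆ B ∨ V i ∩ B = ∅) → B = ∅ := by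
      intro B hBU' hrB hio
      have hBU : B ⊆ U := hBU'.trans (Finset.sdiff_subset)
      have hBpriv : ∀ v ∈ B, v ∉ priv := fun v hv => (Finset.mem_sdiff.mp (hBU' hv)).2
      by_cases hcB : c ∈ B
      · have hBP := H3 (B ∪ priv) (Finset.union_subset hBU hprivU)
          (by simp [hrB, hrpriv]) ?_
        · have : B ⊆ B ∪ priv := Finset.subset_union_left
          rw [hBP] at this
          exact Finset.subset_empty.mp this
        intro i hi
        by_cases hii : i = i0
        · subst hii
          left
          intro v hv
          by_cases hvc : v = c
          · exact Finset.mem_union_left _ (hvc ▸ hcB)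
          · exact Finset.mem_union_right _ (Finset.mem_erase.mpr ⟨hvc, hv⟩)
        · rcases hio i (Finset.mem_erase.mpr ⟨hii, hi⟩) with h | h
          · exact Or.inl (h.trans Finset.subset_union_left)
          · right
            rw [Finset.eq_empty_iff_forall_notMem]
            intro v hv
            obtain ⟨hvV, hvBP⟩ := Finset.mem_inter.mp hv
            rcases Finset.mem_union.mp hvBP with h' | h'
            · rw [Finset.eq_empty_iff_forall_notMem] at h
              exact h v (Finset.mem_inter.mpr ⟨hvV, h'⟩)
            · exact hprivother i hi hii v h' hvV
      · refine H3 B hBU hrB ?_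
        intro i hi
        by_cases hii : i = i0
        · subst hii
          right
          rw [Finset.eq_empty_iff_forall_notMem]
          intro v hv
          obtain ⟨hvV, hvB⟩ := Finset.mem_inter.mp hv
          by_cases hvc : v = c
          · exact hcB (hvc ▸ hvB)
          · exact hBpriv v hvB (Finset.mem_erase.mpr ⟨hvc, hvV⟩)
        · exact hio i (Finset.mem_erase.mpr ⟨hii, hi⟩)
    have hI'k : I'.card ≤ k := by
      rw [hI'def, Finset.card_erase_of_mem hi0]
      omega
    by_cases hz' : ∃ j ∈ U', j ≠ r ∧ z j ≠ 0
    · obtain ⟨B, hBU', hrB, hone, hsum⟩ := IH I' U' hI'k hrU' H0' H1' H2' H3' hz'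
      have hBU : B ⊆ U := hBU'.trans (Finset.sdiff_subset)
      have hBpriv : ∀ v ∈ B, v ∉ priv := fun v hv => (Finset.mem_sdiff.mp (hBU' hv)).2
      by_cases hcB : c ∈ B
      · have hdisj : Disjoint B priv := Finset.disjoint_left.mpr hBpriv
        by_cases hBP : ∑ j ∈ B ∪ priv, z j = 0
        · -- use priv
          have hPsum : ∑ j ∈ priv, z j ≠ 0 := by
            rw [Finset.sum_union hdisj] at hBP
            intro h
            rw [h] at hBP
            exact hsum (by omega)
          refine ⟨priv, hprivU, hrpriv, ?_, hPsum⟩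
          have key : ∀ i ∈ I, ((V i ∩ priv).Nonempty ∧ ¬ V i ⊆ priv) → i = i0 := by
            rintro i hi ⟨⟨v, hv⟩, _⟩
            by_contra hne
            obtain ⟨hvV, hvP⟩ := Finset.mem_inter.mp hv
            exact hprivother i hi hne v hvP hvV
          intro i1 hi1 i2 hi2 hs1 hs2
          rw [key i1 hi1 hs1, key i2 hi2 hs2]
        · -- use B ∪ priv
          refine ⟨B ∪ priv, Finset.union_subset hBU hprivU, by simp [hrB, hrpriv], ?_, hBP⟩
          have hsubi0 : V i0 ⊆ B ∪ priv := by
            intro v hv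
            by_cases hvc : v = c
            · exact Finset.mem_union_left _ (hvc ▸ hcB)
            · exact Finset.mem_union_right _ (Finset.mem_erase.mpr ⟨hvc, hv⟩)
          have key : ∀ i ∈ I, ((V i ∩ (B ∪ priv)).Nonempty ∧ ¬ V i ⊆ B ∪ priv) →
              (i ∈ I' ∧ ((V i ∩ B).Nonempty ∧ ¬ V i ⊆ B)) := by
            intro i hi hs
            by_cases hii : i = i0
            · exact absurd (hii ▸ hsubi0) hs.2
            have hiI' : i ∈ I' := Finset.mem_erase.mpr ⟨hii, hi⟩
            have hdvp : ∀ v ∈ V i, v ∉ priv := fun v hv hp =>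
              hprivother i hi hii v hp hv
            obtain ⟨⟨v, hv⟩, hns⟩ := hs
            obtain ⟨hvV, hvBP⟩ := Finset.mem_inter.mp hv
            have hvB : v ∈ B := by
              rcases Finset.mem_union.mp hvBP with h | h
              · exact h
              · exact absurd h (hdvp v hvV)
            refine ⟨hiI', ⟨v, Finset.mem_inter.mpr ⟨hvV, hvB⟩⟩, fun hsub => hns ?_⟩
            exact hsub.trans Finset.subset_union_left
          intro i1 hi1 i2 hi2 hs1 hs2
          obtain ⟨m1, s1⟩ := key i1 hi1 hs1
          obtain ⟨m2, s2⟩ := key i2 hi2 hs2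
          exact hone i1 m1 i2 m2 s1 s2
      · -- c ∉ B : reuse B
        refine ⟨B, hBU, hrB, ?_, hsum⟩
        have hVi0B : ∀ v, v ∉ V i0 ∩ B := by
          intro v hv
          obtain ⟨hvV, hvB⟩ := Finset.mem_inter.mp hv
          by_cases hvc : v = c
          · exact hcB (hvc ▸ hvB)
          · exact hBpriv v hvB (Finset.mem_erase.mpr ⟨hvc, hvV⟩)
        have key : ∀ i ∈ I, ((V i ∩ B).Nonempty ∧ ¬ V i ⊆ B) → i ∈ I' := by
          intro i hi hs
          by_cases hii : i = i0
          · subst hii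
            obtain ⟨v, hv⟩ := hs.1
            exact absurd hv (hVi0B v)
          · exact Finset.mem_erase.mpr ⟨hii, hi⟩
        intro i1 hi1 i2 hi2 hs1 hs2
        exact hone i1 (key i1 hi1 hs1) i2 (key i2 hi2 hs2) hs1 hs2
    · -- all nonzero coords are in priv
      push_neg at hz'
      obtain ⟨j, hjU, hjr, hjz⟩ := hz
      have hjpriv : j ∈ priv := by
        by_contra h
        exact hjz (hz' j (Finset.mem_sdiff.mpr ⟨hjU, h⟩) hjr)
      refine ⟨{j}, Finset.singleton_subset_iff.mpr (hprivU hjpriv),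
        by simp [Ne.symm hjr], ?_, by simpa using hjz⟩
      have key : ∀ i ∈ I, ((V i ∩ {j}).Nonempty ∧ ¬ V i ⊆ {j}) → i = i0 := by
        rintro i hi ⟨⟨v, hv⟩, _⟩
        by_contra hne
        obtain ⟨hvV, hvj⟩ := Finset.mem_inter.mp hv
        rw [Finset.mem_singleton] at hvj
        exact hprivother i hi hne j hjpriv (hvj ▸ hvV)
      intro i1 hi1 i2 hi2 hs1 hs2
      rw [key i1 hi1 hs1, key i2 hi2 hs2]

end Core

lemma setSum_mem {ι V : Type*} [DecidableEq ι] [AddCommMonoid V] (s : Finset ι)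
    (A : ι → Set V) (x : V) (hx : x ∈ ∑ i ∈ s, A i) :
    ∃ g : ι → V, (∀ i ∈ s, g i ∈ A i) ∧ x = ∑ i ∈ s, g i := by
  induction s using Finset.cons_induction_on generalizing x with
  | empty =>
    refine ⟨fun _ => 0, by simp, ?_⟩
    simpa using hx
  | cons _ _ ha IH =>
    rename_i a s
    rw [Finset.sum_cons, Set.mem_add] at hx
    obtain ⟨y, hy, w, hw, hxy⟩ := hx
    obtain ⟨g, hg, rfl⟩ := IH w hw
    refine ⟨Function.update g a y, ?_, ?_⟩
    · intro i hi
      rcases Finset.mem_cons.mp hi with rfl | hi'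
      · simpa using hy
      · rw [Function.update_of_ne (ne_of_mem_of_not_mem hi' ha)]
        exact hg i hi'
    · rw [Finset.sum_cons, Function.update_self, ← hxy]
      congr 1
      exact (Finset.sum_congr rfl fun i hi =>
        Function.update_of_ne (ne_of_mem_of_not_mem hi ha) _ _).symm

lemma sep_interior {N : Type*} [NormedAddCommGroup N] [NormedSpace ℝ N]
    (f : N →ₗ[ℝ] ℝ) (u : N) (hu : f u = 1) (c : ℝ) (P Q : Set N)
    (hP : ∀ x ∈ P, f x ≤ c) (hQ : ∀ x ∈ Q, c ≤ f x) :
    Disjoint (interior P) Q := by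
  rw [Set.disjoint_left]
  intro x hxP hxQ
  obtain ⟨ε, hε, hball⟩ := Metric.isOpen_iff.mp isOpen_interior x hxP
  set t := ε / (2 * (‖u‖ + 1)) with ht
  have hu0 : (0:ℝ) ≤ ‖u‖ := norm_nonneg u
  have htpos : 0 < t := by positivity
  have hmem : x + t • u ∈ P := by
    refine interior_subset (hball ?_)
    rw [Metric.mem_ball, dist_eq_norm, add_sub_cancel_left, norm_smul, Real.norm_eq_abs,
      abs_of_pos htpos]
    rw [ht]
    rw [div_mul_eq_mul_div]
    rw [div_lt_iff₀ (by positivity)]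
    nlinarith
  have h1 : f x + t ≤ c := by
    have := hP _ hmem
    rwa [map_add, map_smul, hu, smul_eq_mul, mul_one] at this
  have h2 : c ≤ f x := hQ x hxQ
  linarith


/-- Let `P_T = Δ⁰_{S_1∩T} + ⋯ + Δ⁰_{S_m∩T}` be `n`-dimensional, where the `S_i`
are admissible and `T ∈ AdS_n`. If `Π = conv(E_1) + ⋯ + conv(E_m)` is a fine mixed cell of
`P_T` (each `E_i` a nonempty subset of `{0} ∪ (S_i ∩ T)`, `Σ(|E_i| − 1) = n`, `Π`
`n`-dimensional), then for every nonzero integer vector `z`, the interiors of `Π` and `z + Π`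
are disjoint. -/
theorem stmt5 (n m : ℕ) (S : Fin m → Finset (Fin n × Bool)) (hS : ∀ i, Adm n (S i))
    (T : Finset (Fin n × Bool)) (hT : AdSn n T)
    (hPdim : affineSpan ℝ (∑ i : Fin m, simp0 n (S i ∩ T)) = ⊤)
    (E : Fin m → Finset (Option (Fin n × Bool)))
    (hE1 : ∀ i, (E i).Nonempty)
    (hE2 : ∀ i, E i ⊆ insert none ((S i ∩ T).image some))
    (hE3 : (∑ i, ((E i).card - 1)) = n)
    (Pcell : Set (Fin n → ℝ))
    (hPcell : Pcell = ∑ i : Fin m, convexHull ℝ (vec0 n '' ↑(E i)))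
    (hdim : affineSpan ℝ Pcell = ⊤)
    (z : Fin n → ℤ) (hz : z ≠ 0) :
    Disjoint (interior Pcell) (interior ((fun j => (z j : ℝ)) +ᵥ Pcell)) := by
  classical
  have hadm : Adm n T := hT.2
  have Tfst : ∀ q1 ∈ T, ∀ q2 ∈ T, Prod.fst q1 = Prod.fst q2 → q1 = q2 := by
    rintro ⟨j1, b1⟩ h1 ⟨j2, b2⟩ h2 h
    simp only at h
    subst h
    cases b1 <;> cases b2
    · rfl
    · exact absurd ⟨h2, h1⟩ (hadm.2 j1)
    · exact absurd ⟨h1, h2⟩ (hadm.2 j1)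
    · rfl
  set V : Fin m → Finset (Option (Fin n)) := fun i => (E i).image (labE n) with hV
  have hmemT : ∀ (i : Fin m) (q : Fin n × Bool), some q ∈ E i → q ∈ T := by
    intro i q h
    rcases Finset.mem_insert.mp (hE2 i h) with h' | h'
    · exact absurd h' (by simp)
    · obtain ⟨q', hq', he⟩ := Finset.mem_image.mp h'
      obtain rfl : q' = q := Option.some.inj he
      exact (Finset.mem_inter.mp hq').2
  have hVcard : ∀ i, (V i).card = (E i).card := by
    intro i
    rw [hV]
    refine Finset.card_image_of_injOn ?_
    intro p1 h1 p2 h2 hpe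
    rw [Finset.mem_coe] at h1 h2
    match p1, p2 with
    | none, none => rfl
    | none, some q => simp [labE] at hpe
    | some q, none => simp [labE] at hpe
    | some q1, some q2 =>
      simp only [labE, Option.map_some] at hpe
      exact congrArg some
        (Tfst q1 (hmemT _ _ h1) q2 (hmemT _ _ h2) (Option.some.inj hpe))
  have hVne : ∀ i, (V i).Nonempty := fun i => by rw [hV]; exact (hE1 i).image _
  have hlabV : ∀ (i : Fin m) (p : Option (Fin n × Bool)), p ∈ E i → labE n p ∈ V i :=
    fun i p hp => by rw [hV]; exact Finset.mem_image_of_mem _ hp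
  -- the value of the functional on the vertices
  have hval : ∀ (A : Finset (Fin n)) (i : Fin m) (p : Option (Fin n × Bool)), p ∈ E i →
      linA n T A (vec0 n p) = (labE n p).elim 0 (fun j => if j ∈ A then (1 : ℝ) else 0) := by
    intro A i p hp
    match p with
    | none => simp [vec0, labE]
    | some q =>
      rw [linA_vec n T hadm A q (hmemT i q hp)]
      simp [labE]
  -- connectivity from full-dimensionality
  have H3geo : ∀ B ⊆ (Finset.univ : Finset (Option (Fin n))), none ∉ B →
      (∀ i ∈ (Finset.univ : Finset (Fin m)), V i ⊆ B ∨ V i ∩ B = ∅) → B = ∅ := by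
    intro B _ hnB hio
    by_contra hBne
    obtain ⟨b0, hb0⟩ := Finset.nonempty_iff_ne_empty.mpr hBne
    set A := Finset.univ.filter (fun j : Fin n => some j ∈ B) with hA
    set cc : Fin m → ℝ := fun i => if V i ⊆ B then 1 else 0 with hcc
    have hgen : ∀ i : Fin m, ∀ y ∈ vec0 n '' ↑(E i), linA n T A y = cc i := by
      rintro i y ⟨p, hp, rfl⟩
      rw [Finset.mem_coe] at hp
      rw [hval A i p hp]
      simp only [hcc]
      rcases hio i (Finset.mem_univ i) with hsub | hdis
      · rw [if_pos hsub]
        match p with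
        | none => exact absurd (hsub (hlabV i none hp)) hnB
        | some q =>
          have hmem : some q.1 ∈ B := hsub (hlabV i (some q) hp)
          have : q.1 ∈ A := by rw [hA]; exact Finset.mem_filter.mpr ⟨Finset.mem_univ _, hmem⟩
          simp [labE, this]
      · have hnsub : ¬ V i ⊆ B := by
          intro hsub
          obtain ⟨v, hv⟩ := hVne i
          rw [Finset.eq_empty_iff_forall_notMem] at hdis
          exact hdis v (Finset.mem_inter.mpr ⟨hv, hsub hv⟩)
        rw [if_neg hnsub]
        match p with
        | none => simp [labE]
        | some q =>
          have hnotin : q.1 ∉ A := by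
            rw [hA]
            simp only [Finset.mem_filter, Finset.mem_univ, true_and]
            intro hmem
            rw [Finset.eq_empty_iff_forall_notMem] at hdis
            exact hdis _ (Finset.mem_inter.mpr ⟨hlabV i (some q) hp, hmem⟩)
          simp [labE, hnotin]
    have hsub : Pcell ⊆ {x | linA n T A x = ∑ i : Fin m, cc i} := by
      intro x hx
      rw [hPcell] at hx
      obtain ⟨g, hg, rfl⟩ := setSum_mem _ _ _ hx
      have hfg : ∀ i ∈ Finset.univ, linA n T A (g i) = cc i := by
        intro i hi
        exact convexHull_min (fun y hy => hgen i y hy)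
          (convex_hyperplane (linA n T A).isLinear (cc i)) (hg i hi)
      rw [Set.mem_setOf_eq, map_sum]
      exact Finset.sum_congr rfl hfg
    have hall : ∀ x : Fin n → ℝ, linA n T A x = ∑ i : Fin m, cc i := by
      intro x
      have hx : x ∈ affineSpan ℝ Pcell := by rw [hdim]; exact AffineSubspace.mem_top ℝ _ x
      refine affineSpan_induction (p := fun y => linA n T A y = ∑ i : Fin m, cc i) hx (fun y hy => hsub hy) ?_
      intro c' p q w hp hq hw
      simp only [vsub_eq_sub, vadd_eq_add, map_add, map_smul, map_sub, smul_eq_mul]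
      rw [hp, hq, hw]
      ring
    have h0 := hall 0
    rw [map_zero] at h0
    match b0, hb0 with
    | none, hb0 => exact hnB hb0
    | some j0, hb0 =>
      have hj0A : j0 ∈ A := by
        rw [hA]; exact Finset.mem_filter.mpr ⟨Finset.mem_univ _, hb0⟩
      have h1 := hall (Pi.single j0 (epsR n T j0))
      rw [linA_single, if_pos hj0A, epsR_sq] at h1
      rw [← h1] at h0
      norm_num at h0
  -- apply the combinatorial core
  obtain ⟨j₀, hj₀⟩ := Function.ne_iff.mp hz
  set zJ : Option (Fin n) → ℤ := fun o => o.elim 0 (fun j => epsZ n T j * z j) with hzJ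
  have hzex : ∃ j ∈ (Finset.univ : Finset (Option (Fin n))), j ≠ none ∧ zJ j ≠ 0 := by
    refine ⟨some j₀, Finset.mem_univ _, by simp, ?_⟩
    rw [hzJ]
    simp only [Option.elim_some]
    refine mul_ne_zero ?_ hj₀
    unfold epsZ
    split_ifs <;> norm_num
  have H2core : ∑ i ∈ (Finset.univ : Finset (Fin m)), ((V i).card - 1)
      = (Finset.univ : Finset (Option (Fin n))).card - 1 := by
    rw [Finset.card_univ, Fintype.card_option, Fintype.card_fin]
    simp only [hVcard]
    rw [hE3]
    omega
  obtain ⟨B, hBU, hrB, hone, hBsum⟩ :=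
    core_lemma none V zJ Finset.univ.card Finset.univ Finset.univ le_rfl (Finset.mem_univ _)
      (fun i _ => Finset.subset_univ _) (fun i _ => hVne i) H2core
      (fun B hB hrB hio => H3geo B hB hrB hio) hzex
  set A := Finset.univ.filter (fun j : Fin n => some j ∈ B) with hA
  have hBA : B = A.image some := by
    ext o
    match o with
    | none => simp [hrB, hA]
    | some j => simp [hA]
  have hδ0 : (∑ j ∈ A, epsZ n T j * z j) ≠ 0 := by
    rw [hBA, Finset.sum_image (fun a _ b _ h => Option.some.inj h)] at hBsum
    simpa [hzJ] using hBsum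
  set δ : ℤ := ∑ j ∈ A, epsZ n T j * z j with hδ
  have hAne : A.Nonempty := by
    by_contra h
    rw [Finset.not_nonempty_iff_eq_empty] at h
    rw [hδ, h, Finset.sum_empty] at hδ0
    exact hδ0 rfl
  obtain ⟨j1, hj1⟩ := hAne
  have hfu : linA n T A (Pi.single j1 (epsR n T j1)) = 1 := by
    rw [linA_single, if_pos hj1, epsR_sq]
  set aa : Fin m → ℝ := fun i => if V i ⊆ B then 1 else 0 with haa
  set bb : Fin m → ℝ := fun i => if (V i ∩ B).Nonempty then 1 else 0 with hbb
  have hvert : ∀ i : Fin m, ∀ y ∈ vec0 n '' ↑(E i),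
      aa i ≤ linA n T A y ∧ linA n T A y ≤ bb i := by
    rintro i y ⟨p, hp, rfl⟩
    rw [Finset.mem_coe] at hp
    rw [hval A i p hp]
    have hbb0 : (0:ℝ) ≤ bb i := by simp only [hbb]; split_ifs <;> norm_num
    have haa1 : aa i ≤ 1 := by simp only [haa]; split_ifs <;> norm_num
    match p with
    | none =>
      have hnsub : ¬ V i ⊆ B := fun h => hrB (h (hlabV i none hp))
      constructor
      · simp only [haa]
        rw [if_neg hnsub]
        simp [labE]
      · simp [labE, hbb0]
    | some q =>
      by_cases hqB : some q.1 ∈ B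
      · have hqA : q.1 ∈ A := by
          rw [hA]; exact Finset.mem_filter.mpr ⟨Finset.mem_univ _, hqB⟩
        have hbbi : bb i = 1 := by
          simp only [hbb]
          rw [if_pos ⟨some q.1, Finset.mem_inter.mpr ⟨hlabV i (some q) hp, hqB⟩⟩]
        constructor
        · simp only [labE, Option.map_some, Option.elim_some, if_pos hqA]
          exact haa1
        · simp only [labE, Option.map_some, Option.elim_some, if_pos hqA]
          rw [hbbi]
      · have hqA : q.1 ∉ A := by rw [hA]; simp [hqB]
        have haai : aa i = 0 := by
          simp only [haa]
          rw [if_neg (fun h => hqB (h (hlabV i (some q) hp)))]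
        constructor
        · simp only [labE, Option.map_some, Option.elim_some, if_neg hqA]
          rw [haai]
        · simp only [labE, Option.map_some, Option.elim_some, if_neg hqA]
          exact hbb0
  have hPa : ∀ x ∈ Pcell,
      (∑ i : Fin m, aa i) ≤ linA n T A x ∧ linA n T A x ≤ ∑ i : Fin m, bb i := by
    intro x hx
    rw [hPcell] at hx
    obtain ⟨g, hg, rfl⟩ := setSum_mem _ _ _ hx
    have hgi : ∀ i ∈ Finset.univ, aa i ≤ linA n T A (g i) ∧ linA n T A (g i) ≤ bb i := by
      intro i hi
      have hsubset : convexHull ℝ (vec0 n '' ↑(E i))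
          ⊆ {x | aa i ≤ linA n T A x} ∩ {x | linA n T A x ≤ bb i} :=
        convexHull_min (fun y hy => ⟨(hvert i y hy).1, (hvert i y hy).2⟩)
          ((convex_halfSpace_ge (linA n T A).isLinear (aa i)).inter
            (convex_halfSpace_le (linA n T A).isLinear (bb i)))
      exact hsubset (hg i hi)
    rw [map_sum]
    exact ⟨Finset.sum_le_sum fun i hi => (hgi i hi).1,
      Finset.sum_le_sum fun i hi => (hgi i hi).2⟩
  have hba : (∑ i : Fin m, bb i) ≤ (∑ i : Fin m, aa i) + 1 := by
    have hpt : ∀ i, ¬((V i ∩ B).Nonempty ∧ ¬ V i ⊆ B) → bb i = aa i := by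
      intro i h
      by_cases hsub : V i ⊆ B
      · obtain ⟨v, hv⟩ := hVne i
        simp only [haa, hbb]
        rw [if_pos hsub, if_pos ⟨v, Finset.mem_inter.mpr ⟨hv, hsub hv⟩⟩]
      · have hne : ¬ (V i ∩ B).Nonempty := fun hn => h ⟨hn, hsub⟩
        simp only [haa, hbb]
        rw [if_neg hne, if_neg hsub]
    by_cases hex : ∃ i0, ((V i0 ∩ B).Nonempty ∧ ¬ V i0 ⊆ B)
    · obtain ⟨i0, hi0⟩ := hex
      have heq : ∀ i ∈ Finset.univ.erase i0, bb i = aa i := fun i hi =>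
        hpt i (fun h =>
          Finset.ne_of_mem_erase hi (hone i (Finset.mem_univ _) i0 (Finset.mem_univ _) h hi0))
      rw [← Finset.add_sum_erase _ bb (Finset.mem_univ i0),
        ← Finset.add_sum_erase _ aa (Finset.mem_univ i0), Finset.sum_congr rfl heq]
      have h1 : bb i0 ≤ 1 := by simp only [hbb]; split_ifs <;> norm_num
      have h2 : 0 ≤ aa i0 := by simp only [haa]; split_ifs <;> norm_num
      linarith
    · rw [Finset.sum_congr rfl (fun i _ => hpt i (not_exists.mp hex i))]
      linarith
  have hδR : linA n T A (fun j => (z j : ℝ)) = (δ : ℝ) := by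
    unfold linA
    simp only [LinearMap.coe_sum, Finset.sum_apply, LinearMap.smul_apply,
      LinearMap.proj_apply, smul_eq_mul]
    rw [hδ]
    push_cast
    exact Finset.sum_congr rfl fun j _ => by rw [epsR]
  rcases hδ0.lt_or_gt with hneg | hpos
  · have hd1 : (δ : ℝ) ≤ -1 := by exact_mod_cast (by omega : δ ≤ -1)
    have hQsub : ∀ x ∈ ((fun j => (z j : ℝ)) +ᵥ Pcell),
        linA n T A x ≤ ∑ i : Fin m, aa i := by
      intro x hx
      rw [Set.mem_vadd_set] at hx
      obtain ⟨p, hp, rfl⟩ := hx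
      rw [vadd_eq_add, map_add, hδR]
      have := (hPa p hp).2
      linarith
    have hPsub : ∀ x ∈ Pcell, (∑ i : Fin m, aa i) ≤ linA n T A x :=
      fun x hx => (hPa x hx).1
    have hdisj := sep_interior (linA n T A) _ hfu (∑ i : Fin m, aa i) _ Pcell hQsub hPsub
    exact hdisj.symm.mono_left interior_subset
  · have hd1 : (1 : ℝ) ≤ (δ : ℝ) := by exact_mod_cast (by omega : (1:ℤ) ≤ δ)
    have hPsub : ∀ x ∈ Pcell, linA n T A x ≤ ∑ i : Fin m, bb i :=
      fun x hx => (hPa x hx).2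
    have hQsub : ∀ x ∈ ((fun j => (z j : ℝ)) +ᵥ Pcell),
        (∑ i : Fin m, bb i) ≤ linA n T A x := by
      intro x hx
      rw [Set.mem_vadd_set] at hx
      obtain ⟨p, hp, rfl⟩ := hx
      rw [vadd_eq_add, map_add, hδR]
      have := (hPa p hp).1
      linarith
    exact (sep_interior (linA n T A) _ hfu (∑ i : Fin m, bb i) Pcell _ hPsub hQsub).mono_right
      interior_subset
end
end

section
/- Let n ≥ 1. Let Q := (n−1)·conv({0, e_1, …, e_n}) = {x ∈ ℝ^n : x_1 + ⋯ + x_n ≤ n−1 and x_i ≥ 0 for all i}, and let ∇_{[n]} := {x ∈ ℝ^n : x_1 + ⋯ + x_n ≥ n−1 and x_i ≤ 1 for all i}. Then for all integer vectors y, z ∈ ℤ^n, the interiors of y + Q and z + ∇_{[n]} are disjoint. -/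
open Pointwise

-- convex hull of {0, e_1,...,e_n} is the corner simplex
lemma hullA (n : ℕ) :
    convexHull ℝ ({0} ∪ Set.range fun i : Fin n => (Pi.single i (1 : ℝ) : Fin n → ℝ)) =
      {x : Fin n → ℝ | (∑ j, x j) ≤ 1 ∧ ∀ i, 0 ≤ x i} := by
  have hconv : Convex ℝ {x : Fin n → ℝ | (∑ j, x j) ≤ 1 ∧ ∀ i, 0 ≤ x i} := by
    have h1 : Convex ℝ {x : Fin n → ℝ | (∑ j, x j) ≤ 1} :=
      convex_halfSpace_le ⟨fun a b => by simp [Finset.sum_add_distrib],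
        fun c a => by simp [Finset.mul_sum]⟩ 1
    have h2 : Convex ℝ {x : Fin n → ℝ | ∀ i, 0 ≤ x i} := by
      have : {x : Fin n → ℝ | ∀ i, 0 ≤ x i} = ⋂ i, {x : Fin n → ℝ | 0 ≤ x i} := by
        ext x; simp
      rw [this]
      exact convex_iInter fun i =>
        convex_halfSpace_ge ⟨fun a b => rfl, fun c a => rfl⟩ 0
    have : {x : Fin n → ℝ | (∑ j, x j) ≤ 1 ∧ ∀ i, 0 ≤ x i} =
        {x : Fin n → ℝ | (∑ j, x j) ≤ 1} ∩ {x : Fin n → ℝ | ∀ i, 0 ≤ x i} := rfl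
    rw [this]; exact h1.inter h2
  apply le_antisymm
  · apply convexHull_min _ hconv
    rintro x (rfl | ⟨i, rfl⟩)
    · constructor <;> simp
    · constructor
      · simp [Pi.single_apply]
      · intro j; simp [Pi.single_apply]; positivity
  · rintro x ⟨hs, hpos⟩
    have h0 : (0 : Fin n → ℝ) ∈
        ({0} ∪ Set.range fun i : Fin n => (Pi.single i (1 : ℝ) : Fin n → ℝ)) := Or.inl rfl
    have key : x = ∑ i : Option (Fin n),
        (Option.elim i (1 - ∑ j, x j) x) •
          (Option.elim i (0 : Fin n → ℝ) fun k => Pi.single k (1 : ℝ)) := by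
      rw [Fintype.sum_option]
      simp only [Option.elim]
      have : ∀ i : Fin n, x i • (Pi.single i (1:ℝ) : Fin n → ℝ) = Pi.single i (x i) := by
        intro i; ext j; simp [Pi.single_apply, mul_comm]
      simp only [this, smul_zero, zero_add, Finset.univ_sum_single]
    rw [key]
    apply (convex_convexHull ℝ _).sum_mem
    · rintro (_ | i) _
      · simpa using hs
      · exact hpos i
    · rw [Fintype.sum_option]; simp
    · rintro (_ | i) _
      · exact subset_convexHull ℝ _ h0
      · exact subset_convexHull ℝ _ (Or.inr ⟨i, rfl⟩)

lemma intQ (n : ℕ) (hn : 1 ≤ n) (c : ℝ) (x : Fin n → ℝ)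
    (hx : x ∈ interior {x : Fin n → ℝ | (∑ j, x j) ≤ c ∧ ∀ i, 0 ≤ x i}) :
    (∑ j, x j) < c ∧ ∀ i, 0 < x i := by
  rw [mem_interior_iff_mem_nhds, Metric.mem_nhds_iff] at hx
  obtain ⟨ε, hε, hball⟩ := hx
  have hmem : ∀ i : Fin n, ∀ s : ℝ, |s| < ε →
      (∑ j, (x + s • (Pi.single i (1:ℝ) : Fin n → ℝ)) j) ≤ c ∧
      ∀ j, 0 ≤ (x + s • (Pi.single i (1:ℝ) : Fin n → ℝ)) j := by
    intro i s hs
    refine hball ?_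
    rw [Metric.mem_ball, dist_pi_lt_iff hε]
    intro j
    simp only [Pi.add_apply, Pi.smul_apply, Pi.single_apply, Real.dist_eq]
    by_cases h : j = i <;> simp [h, abs_of_nonneg, hε] <;>
      simpa using hs
  have i0 : Fin n := ⟨0, hn⟩
  constructor
  · have := (hmem i0 (ε/2) (by rw [abs_of_pos (by linarith)]; linarith)).1
    have hsum : (∑ j, (x + (ε/2) • (Pi.single i0 (1:ℝ) : Fin n → ℝ)) j)
        = (∑ j, x j) + ε/2 := by
      simp [Finset.sum_add_distrib, Pi.single_apply]
    rw [hsum] at this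
    linarith
  · intro i
    have := (hmem i (-(ε/2)) (by rw [abs_neg, abs_of_pos (by linarith)]; linarith)).2 i
    simp only [Pi.add_apply, Pi.smul_apply, Pi.single_apply, if_pos rfl] at this
    simp at this
    linarith

lemma intN (n : ℕ) (c : ℝ) (x : Fin n → ℝ)
    (hx : x ∈ interior {x : Fin n → ℝ | c ≤ (∑ j, x j) ∧ ∀ i, x i ≤ 1}) :
    ∀ i, x i < 1 := by
  rw [mem_interior_iff_mem_nhds, Metric.mem_nhds_iff] at hx
  obtain ⟨ε, hε, hball⟩ := hx
  intro i
  have hmem : (x + (ε/2) • (Pi.single i (1:ℝ) : Fin n → ℝ)) ∈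
      {x : Fin n → ℝ | c ≤ (∑ j, x j) ∧ ∀ i, x i ≤ 1} := by
    refine hball ?_
    rw [Metric.mem_ball, dist_pi_lt_iff hε]
    intro j
    simp only [Pi.add_apply, Pi.smul_apply, Pi.single_apply, Real.dist_eq]
    by_cases h : j = i <;> simp [h, abs_of_pos, abs_of_nonneg, hε] <;> linarith
  have := hmem.2 i
  simp only [Pi.add_apply, Pi.smul_apply, Pi.single_apply, if_pos rfl] at this
  simp at this
  linarith

/-- For `n ≥ 1`, let
`Q := (n−1)·conv({0, e_1, …, e_n}) = {x : x_1 + ⋯ + x_n ≤ n−1, x_i ≥ 0}` and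
`∇_[n] := {x : x_1 + ⋯ + x_n ≥ n−1, x_i ≤ 1}`. Then for all integer vectors `y, z`,
the interiors of `y + Q` and `z + ∇_[n]` are disjoint. -/
theorem stmt6 (n : ℕ) (hn : 1 ≤ n) (y z : Fin n → ℤ) :
    (((n : ℝ) - 1) • convexHull ℝ
        ({0} ∪ Set.range fun i : Fin n => (Pi.single i (1 : ℝ) : Fin n → ℝ)) =
      {x : Fin n → ℝ | (∑ j, x j) ≤ (n : ℝ) - 1 ∧ ∀ i, 0 ≤ x i}) ∧
    Disjoint
      (interior ((fun j => (y j : ℝ)) +ᵥ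
        {x : Fin n → ℝ | (∑ j, x j) ≤ (n : ℝ) - 1 ∧ ∀ i, 0 ≤ x i}))
      (interior ((fun j => (z j : ℝ)) +ᵥ
        {x : Fin n → ℝ | (n : ℝ) - 1 ≤ (∑ j, x j) ∧ ∀ i, x i ≤ 1})) := by
  have hc : (0:ℝ) ≤ (n : ℝ) - 1 := by
    have : (1:ℝ) ≤ n := by exact_mod_cast hn
    linarith
  constructor
  · rw [hullA]
    set c := (n : ℝ) - 1 with hcdef
    ext x
    constructor
    · rintro ⟨w, ⟨hw1, hw2⟩, rfl⟩
      constructor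
      · have : (∑ j, (c • w) j) = c * ∑ j, w j := by
          simp [Finset.mul_sum]
        rw [this]
        calc c * ∑ j, w j ≤ c * 1 := by
              exact mul_le_mul_of_nonneg_left hw1 hc
          _ = c := mul_one c
      · intro i
        exact mul_nonneg hc (hw2 i)
    · rintro ⟨hs, hpos⟩
      rcases eq_or_lt_of_le hc with h0 | h0
      · have hx0 : x = 0 := by
          funext i
          have h1 : ∀ j ∈ Finset.univ, 0 ≤ x j := fun j _ => hpos j
          have := Finset.sum_nonneg h1
          have hxi : x i ≤ ∑ j, x j :=
            Finset.single_le_sum h1 (Finset.mem_univ i)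
          have h2 : x i ≤ 0 := by rw [← h0] at hs; linarith
          show x i = 0
          linarith [hpos i]
        refine ⟨0, ⟨by simp, fun i => le_refl 0⟩, ?_⟩
        rw [hx0]; simp
      · refine ⟨c⁻¹ • x, ⟨?_, ?_⟩, ?_⟩
        · have : (∑ j, (c⁻¹ • x) j) = c⁻¹ * ∑ j, x j := by
            simp [Finset.mul_sum]
          rw [this]
          rw [inv_mul_le_iff₀ h0]
          linarith
        · intro i
          exact mul_nonneg (by positivity) (hpos i)
        · show c • (c⁻¹ • x) = x
          rw [smul_smul, mul_inv_cancel₀ (ne_of_gt h0), one_smul]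
  · rw [Set.disjoint_left]
    intro x hx1 hx2
    rw [interior_vadd, Set.mem_vadd_set_iff_neg_vadd_mem] at hx1 hx2
    set u : Fin n → ℝ := -(fun j => (y j : ℝ)) +ᵥ x with hu
    set v : Fin n → ℝ := -(fun j => (z j : ℝ)) +ᵥ x with hv
    obtain ⟨hsu, hupos⟩ := intQ n hn _ u hx1
    have hvlt := intN n _ v hx2
    have hvsum : ((n:ℝ) - 1) ≤ ∑ j, v j := (interior_subset hx2).1
    -- each (y j - z j : ℝ) < 1, hence y j ≤ z j
    have hle : ∀ j, y j ≤ z j := by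
      intro j
      have h1 : u j = x j - y j := by simp [hu]; ring
      have h2 : v j = x j - z j := by simp [hv]; ring
      have : ((y j : ℝ) - z j) < 1 := by
        have := hupos j; have := hvlt j
        rw [h1] at *; rw [h2] at *
        linarith [hupos j, hvlt j]
      have : (y j : ℝ) < z j + 1 := by linarith
      have : y j < z j + 1 := by exact_mod_cast this
      omega
    have hsum_uv : ∑ j, u j - ∑ j, v j = ∑ j, ((z j : ℝ) - y j) := by
      rw [← Finset.sum_sub_distrib]
      apply Finset.sum_congr rfl
      intro j _
      simp [hu, hv]; ring
    have h1 : (0:ℝ) ≤ ∑ j, ((z j : ℝ) - y j) := by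
      apply Finset.sum_nonneg
      intro j _
      have := hle j
      have : (y j : ℝ) ≤ z j := by exact_mod_cast this
      linarith
    linarith [hsu, hvsum, hsum_uv]
end

section
/- Let S_1,…,S_m be admissible sets of signed vectors in ℝ^n, let T ∈ AdS_n, and suppose P_T := Δ⁰_{S_1∩T} + ⋯ + Δ⁰_{S_m∩T} is n-dimensional. Let Π := conv(E_1) + ⋯ + conv(E_m) be a fine mixed cell of P_T, i.e., each E_i is a nonempty subset of {0} ∪ (S_i ∩ T), Σ_{i=1}^m (|E_i| − 1) = n, and Π is n-dimensional. Let Π̂ := Σ_{i : |E_i| ≥ 2} conv(E_i), and let x ∈ ℤ^n be the lattice point x := Σ_{i : |E_i| = 1} w_i, where w_i is the unique element of E_i, so that Π = x + Π̂. Then the following are equivalent: (1) ∇_T ⊆ Π̂; (2) x lies in (P_T − □_T) ∩ ℤ^n and x is the unique point u of (P_T − □_T) ∩ ℤ^n satisfying u + ∇_T ⊆ Π; (3) |E_i| ≤ 2 for all i ∈ [m], i.e., Π is a zonotope. -/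
open Pointwise

noncomputable section

/-- `σ_T := Σ_{v ∈ T} v`. -/
def sigmaT (n : ℕ) (T : Finset (Fin n × Bool)) : Fin n → ℝ := ∑ p ∈ T, sgnVec n p

/-- `∇_T := conv({σ_T} ∪ {σ_T − v : v ∈ T})`. -/
def nablaT (n : ℕ) (T : Finset (Fin n × Bool)) : Set (Fin n → ℝ) :=
  convexHull ℝ ({sigmaT n T} ∪ (fun p => sigmaT n T - sgnVec n p) '' ↑T)

/-- `□_T := Σ_{v ∈ T} conv{0, v}`, the unit cube of the octant of `T`. -/
def cubeT (n : ℕ) (T : Finset (Fin n × Bool)) : Set (Fin n → ℝ) :=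
  ∑ p ∈ T, convexHull ℝ {0, sgnVec n p}

set_option linter.unusedSectionVars false
open Pointwise

noncomputable section

namespace Stmt7Aux

variable {n : ℕ}

/-- vertex vectors: `none ↦ 0`, `some j ↦ c j • e j`. -/
def vvc (c : Fin n → ℝ) : Option (Fin n) → (Fin n → ℝ)
  | none => 0
  | some j => c j • (Pi.single j 1 : Fin n → ℝ)

@[simp] lemma vvc_none (c : Fin n → ℝ) : vvc c none = 0 := rfl
@[simp] lemma vvc_some (c : Fin n → ℝ) (j : Fin n) :
    vvc c (some j) = c j • (Pi.single j 1 : Fin n → ℝ) := rfl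

lemma vvc_some_eq_single (c : Fin n → ℝ) (j : Fin n) :
    vvc c (some j) = (Pi.single j (c j) : Fin n → ℝ) := by
  ext k
  by_cases h : k = j
  · subst h; simp
  · simp [Pi.single_apply, h]

lemma vvc_apply_ne (c : Fin n → ℝ) {o : Option (Fin n)} {k : Fin n} (h : o ≠ some k) :
    vvc c o k = 0 := by
  cases o with
  | none => rfl
  | some j =>
      have hj : k ≠ j := by rintro rfl; exact h rfl
      rw [vvc_some_eq_single]
      simp [Pi.single_apply, hj]

lemma vvc_apply_self (c : Fin n → ℝ) (j : Fin n) : vvc c (some j) j = c j := by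
  rw [vvc_some_eq_single]; simp

/-- the corner `σ`. -/
def sigv (c : Fin n → ℝ) : Fin n → ℝ := ∑ j, c j • (Pi.single j 1 : Fin n → ℝ)

lemma sigv_apply (c : Fin n → ℝ) (k : Fin n) : sigv c k = c k := by
  unfold sigv
  rw [Finset.sum_apply]
  rw [Finset.sum_eq_single k]
  · simp
  · intro b _ hb
    have : k ≠ b := Ne.symm hb
    simp [Pi.single_apply, this]
  · simp

/-- summing functional -/
def fl (c : Fin n → ℝ) : (Fin n → ℝ) →ₗ[ℝ] ℝ where
  toFun y := ∑ k, c k * y k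
  map_add' y z := by simp [mul_add, Finset.sum_add_distrib]
  map_smul' r y := by simp [Finset.mul_sum]; congr 1; ext k; ring

lemma fl_apply (c : Fin n → ℝ) (y : Fin n → ℝ) : fl c y = ∑ k, c k * y k := rfl

lemma fl_single (c : Fin n → ℝ) (j : Fin n) (a : ℝ) :
    fl c (Pi.single j a : Fin n → ℝ) = c j * a := by
  rw [fl_apply, Finset.sum_eq_single j]
  · simp
  · intro b _ hb
    have : b ≠ j := hb
    simp [Pi.single_apply, this]
  · simp

lemma fl_vvc_some (c : Fin n → ℝ) (hc : ∀ j, c j = 1 ∨ c j = -1) (j : Fin n) :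
    fl c (vvc c (some j)) = 1 := by
  rw [vvc_some_eq_single, fl_single]
  rcases hc j with h | h <;> rw [h] <;> norm_num

lemma fl_sigv (c : Fin n → ℝ) (hc : ∀ j, c j = 1 ∨ c j = -1) : fl c (sigv c) = n := by
  rw [fl_apply]
  have h1 : ∀ k : Fin n, c k * sigv c k = 1 := by
    intro k; rw [sigv_apply]
    rcases hc k with h | h <;> rw [h] <;> norm_num
  simp only [h1]
  simp

/-- integrality -/
def IsIntVec (y : Fin n → ℝ) : Prop := ∀ k, ∃ q : ℤ, y k = (q : ℝ)

lemma isInt_of_pm {c : Fin n → ℝ} (hc : ∀ j, c j = 1 ∨ c j = -1) (k : Fin n) :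
    ∃ q : ℤ, c k = (q : ℝ) := by
  rcases hc k with h | h
  · exact ⟨1, by rw [h]; norm_num⟩
  · exact ⟨-1, by rw [h]; push_cast; ring⟩

lemma IsIntVec.zero : IsIntVec (0 : Fin n → ℝ) := fun _ => ⟨0, by simp⟩

lemma IsIntVec.add {y z : Fin n → ℝ} (hy : IsIntVec y) (hz : IsIntVec z) : IsIntVec (y + z) := by
  intro k
  obtain ⟨a, ha⟩ := hy k; obtain ⟨b, hb⟩ := hz k
  exact ⟨a + b, by simp [ha, hb]⟩

lemma IsIntVec.sub {y z : Fin n → ℝ} (hy : IsIntVec y) (hz : IsIntVec z) : IsIntVec (y - z) := by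
  intro k
  obtain ⟨a, ha⟩ := hy k; obtain ⟨b, hb⟩ := hz k
  exact ⟨a - b, by simp [ha, hb]⟩

lemma IsIntVec.vvc {c : Fin n → ℝ} (hc : ∀ j, c j = 1 ∨ c j = -1) (o : Option (Fin n)) :
    IsIntVec (Stmt7Aux.vvc c o) := by
  intro k
  by_cases h : o = some k
  · subst h
    rw [vvc_apply_self]
    exact isInt_of_pm hc k
  · exact ⟨0, by rw [vvc_apply_ne c h]; simp⟩

lemma IsIntVec.sigv {c : Fin n → ℝ} (hc : ∀ j, c j = 1 ∨ c j = -1) :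
    IsIntVec (Stmt7Aux.sigv c) := by
  intro k
  rw [sigv_apply]
  exact isInt_of_pm hc k

lemma IsIntVec.finsetSum {ι : Type*} (s : Finset ι) (f : ι → (Fin n → ℝ))
    (h : ∀ i ∈ s, IsIntVec (f i)) : IsIntVec (∑ i ∈ s, f i) := by
  classical
  induction s using Finset.cons_induction with
  | empty => simpa using IsIntVec.zero
  | cons a s ha ih =>
      rw [Finset.sum_cons]
      exact (h a (Finset.mem_cons_self a s)).add (ih fun i hi => h i (Finset.mem_cons_of_mem hi))

/-- SubL1: linearly independent vectors supported on a finite coordinate set. -/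
lemma card_le_of_support {ι : Type*} [Fintype ι] (w : ι → (Fin n → ℝ))
    (hw : LinearIndependent ℝ w) (C : Finset (Fin n))
    (hsupp : ∀ i k, k ∉ C → w i k = 0) :
    Fintype.card ι ≤ C.card := by
  classical
  set L : (Fin n → ℝ) →ₗ[ℝ] (↥C → ℝ) := LinearMap.funLeft ℝ ℝ (fun k : ↥C => (k : Fin n))
  have hLw : LinearIndependent ℝ (fun i => L (w i)) := by
    rw [Fintype.linearIndependent_iff]
    intro g hg
    have hsum : (∑ i, g i • w i) = 0 := by
      funext k
      by_cases hk : k ∈ C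
      · have := congrFun hg ⟨k, hk⟩
        simpa [L, LinearMap.funLeft, Finset.sum_apply] using this
      · simp only [Finset.sum_apply, Pi.zero_apply]
        refine Finset.sum_eq_zero fun i _ => ?_
        simp [hsupp i k hk]
    exact (Fintype.linearIndependent_iff.1 hw) g hsum
  have := hLw.fintype_card_le_finrank
  rwa [Module.finrank_fintype_fun_eq_card, Fintype.card_coe] at this

/-- SubL2: additionally lying in the kernel of `fl c`. -/
lemma card_add_one_le_of_support_flzero {ι : Type*} [Fintype ι] (c : Fin n → ℝ)
    (hc : ∀ j, c j = 1 ∨ c j = -1) (w : ι → (Fin n → ℝ))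
    (hw : LinearIndependent ℝ w) (C : Finset (Fin n)) (hCne : C.Nonempty)
    (hsupp : ∀ i k, k ∉ C → w i k = 0)
    (hker : ∀ i, fl c (w i) = 0) :
    Fintype.card ι + 1 ≤ C.card := by
  classical
  obtain ⟨k₀, hk₀⟩ := hCne
  set u : Fin n → ℝ := (Pi.single k₀ 1 : Fin n → ℝ)
  set w' : Option ι → (Fin n → ℝ) := fun o => o.elim u w
  have hu : fl c u ≠ 0 := by
    rw [fl_single]
    rcases hc k₀ with h | h <;> rw [h] <;> norm_num
  have hw' : LinearIndependent ℝ w' := by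
    rw [linearIndependent_option]
    constructor
    · exact hw
    · intro hmem
      have hspanle : Submodule.span ℝ (Set.range (w' ∘ some)) ≤ LinearMap.ker (fl c) := by
        rw [Submodule.span_le]
        rintro _ ⟨i, rfl⟩
        simpa [w'] using hker i
      have := hspanle hmem
      simp only [LinearMap.mem_ker] at this
      exact hu this
  have := card_le_of_support w' hw' C (by
    rintro (_ | i) k hk
    · show u k = 0
      have : k ≠ k₀ := by rintro rfl; exact hk hk₀
      simp [u, Pi.single_apply, this]
    · exact hsupp i k hk)
  simpa [Fintype.card_option, Nat.add_comm] using this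


section Edges

variable {I : Type} [Fintype I] [DecidableEq I]

/-- direction vector of an edge -/
def edgeDir (c : Fin n → ℝ) (A B : I → Option (Fin n)) (i : I) : Fin n → ℝ :=
  vvc c (B i) - vvc c (A i)

/-- the coordinates touched by an edge -/
def cI (A B : I → Option (Fin n)) (i : I) : Finset (Fin n) :=
  Finset.univ.filter (fun k => A i = some k ∨ B i = some k)

lemma mem_cI {A B : I → Option (Fin n)} {i : I} {k : Fin n} :
    k ∈ cI A B i ↔ (A i = some k ∨ B i = some k) := by
  simp [cI]

lemma edgeDir_apply_zero {c : Fin n → ℝ} {A B : I → Option (Fin n)} {i : I} {k : Fin n}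
    (h : k ∉ cI A B i) : edgeDir c A B i k = 0 := by
  rw [mem_cI] at h
  push_neg at h
  have h1 : vvc c (B i) k = 0 := vvc_apply_ne c h.2
  have h2 : vvc c (A i) k = 0 := vvc_apply_ne c h.1
  simp [edgeDir, h1, h2]

lemma cI_card_le_two (A B : I → Option (Fin n)) (i : I) : (cI A B i).card ≤ 2 := by
  have h := Finset.card_le_card_of_injOn (f := some)
    (s := cI A B i) (t := {A i, B i}) (by
      intro k hk
      rw [Finset.mem_coe, mem_cI] at hk
      rcases hk with h | h
      · exact Finset.mem_insert.2 (Or.inl h.symm)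
      · exact Finset.mem_insert.2 (Or.inr (Finset.mem_singleton.2 h.symm)))
    (fun a _ b _ hab => Option.some_injective _ hab)
  calc (cI A B i).card ≤ ({A i, B i} : Finset (Option (Fin n))).card := h
    _ ≤ _ := Finset.card_insert_le _ _

lemma cI_card_le_one {A B : I → Option (Fin n)} {i : I} (h : A i = none ∨ B i = none) :
    (cI A B i).card ≤ 1 := by
  rcases h with h | h
  · have hs := Finset.card_le_card_of_injOn (f := some)
      (s := cI A B i) (t := {B i}) (by
        intro k hk
        rw [Finset.mem_coe, mem_cI] at hk
        rcases hk with h' | h'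
        · rw [h] at h'; exact absurd h' (by simp)
        · exact Finset.mem_singleton.2 h'.symm)
      (fun a _ b _ hab => Option.some_injective _ hab)
    simpa using hs
  · have hs := Finset.card_le_card_of_injOn (f := some)
      (s := cI A B i) (t := {A i}) (by
        intro k hk
        rw [Finset.mem_coe, mem_cI] at hk
        rcases hk with h' | h'
        · exact Finset.mem_singleton.2 h'.symm
        · rw [h] at h'; exact absurd h' (by simp))
      (fun a _ b _ hab => Option.some_injective _ hab)
    simpa using hs

/-- Hall-type counting bound I. -/
lemma subset_card_le_coords {c : Fin n → ℝ} {A B : I → Option (Fin n)}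
    (hind : LinearIndependent ℝ (edgeDir c A B)) (s : Finset I) :
    s.card ≤ (s.biUnion (cI A B)).card := by
  classical
  have h := card_le_of_support (fun i : ↥s => edgeDir c A B i.val)
    (hind.comp _ Subtype.val_injective) (s.biUnion (cI A B)) (by
      intro i k hk
      apply edgeDir_apply_zero
      intro hmem
      exact hk (Finset.mem_biUnion.2 ⟨i.1, i.2, hmem⟩))
  simpa [Fintype.card_coe] using h

/-- Hall-type counting bound II: no edge touches the origin vertex. -/
lemma subset_card_add_one_le_coords {c : Fin n → ℝ} {A B : I → Option (Fin n)}
    (hc : ∀ j, c j = 1 ∨ c j = -1)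
    (hind : LinearIndependent ℝ (edgeDir c A B)) (s : Finset I) (hs : s.Nonempty)
    (hnone : ∀ i ∈ s, A i ≠ none ∧ B i ≠ none) :
    s.card + 1 ≤ (s.biUnion (cI A B)).card := by
  classical
  obtain ⟨i₁, hi₁⟩ := hs
  have hCne : (s.biUnion (cI A B)).Nonempty := by
    rcases hB : B i₁ with _ | k
    · exact absurd hB (hnone i₁ hi₁).2
    · exact ⟨k, Finset.mem_biUnion.2 ⟨i₁, hi₁, mem_cI.2 (Or.inr hB)⟩⟩
  have h := card_add_one_le_of_support_flzero c hc (fun i : ↥s => edgeDir c A B i.val)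
    (hind.comp _ Subtype.val_injective) (s.biUnion (cI A B)) hCne
    (by
      intro i k hk
      apply edgeDir_apply_zero
      intro hmem
      exact hk (Finset.mem_biUnion.2 ⟨i.1, i.2, hmem⟩))
    (by
      intro i
      rcases hA : A i.val with _ | ja
      · exact absurd hA (hnone i.val i.2).1
      rcases hB : B i.val with _ | jb
      · exact absurd hB (hnone i.val i.2).2
      show fl c (vvc c (B i.val) - vvc c (A i.val)) = 0
      rw [map_sub, hA, hB, fl_vvc_some c hc, fl_vvc_some c hc, sub_self])
  simpa [Fintype.card_coe] using h

/-- The Hall condition for choosing distinct non-root vertices for the edges. -/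
lemma hall_bound {c : Fin n → ℝ} {A B : I → Option (Fin n)}
    (hc : ∀ j, c j = 1 ∨ c j = -1)
    (hind : LinearIndependent ℝ (edgeDir c A B)) (ρ : Option (Fin n)) (s : Finset I) :
    s.card ≤ (s.biUnion fun i => ({A i, B i} : Finset (Option (Fin n))).erase ρ).card := by
  classical
  set Vs := s.biUnion (fun i => ({A i, B i} : Finset (Option (Fin n)))) with hVs
  set Cs := s.biUnion (cI A B) with hCs
  have hbe : (s.biUnion fun i => ({A i, B i} : Finset (Option (Fin n))).erase ρ) = Vs.erase ρ := by
    ext o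
    simp only [Finset.mem_biUnion, Finset.mem_erase, hVs]
    tauto
  have herase : Vs.erase none = Cs.image some := by
    ext o
    cases o with
    | none => simp
    | some k =>
        simp only [Finset.mem_erase, Finset.mem_image, hVs, hCs, Finset.mem_biUnion,
          Finset.mem_insert, Finset.mem_singleton]
        constructor
        · rintro ⟨-, i, hi, h | h⟩
          · exact ⟨k, ⟨i, hi, mem_cI.2 (Or.inl h.symm)⟩, rfl⟩
          · exact ⟨k, ⟨i, hi, mem_cI.2 (Or.inr h.symm)⟩, rfl⟩
        · rintro ⟨k', hk', hkk⟩
          obtain rfl : k' = k := Option.some_injective _ hkk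
          obtain ⟨i, hi, hki⟩ := hk'
          rcases mem_cI.1 hki with h | h
          · exact ⟨by simp, i, hi, Or.inl h.symm⟩
          · exact ⟨by simp, i, hi, Or.inr (h.symm)⟩
  have hcards : (Vs.erase none).card = Cs.card := by
    rw [herase, Finset.card_image_of_injective _ (Option.some_injective _)]
  rw [hbe]
  have h1 : Vs.card - 1 ≤ (Vs.erase ρ).card := Finset.pred_card_le_card_erase
  by_cases hnone : none ∈ Vs
  · have h2 : (Vs.erase none).card = Vs.card - 1 := Finset.card_erase_of_mem hnone
    have h3 : s.card ≤ Cs.card := subset_card_le_coords hind s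
    have h4 : 1 ≤ Vs.card := Finset.card_pos.2 ⟨none, hnone⟩
    omega
  · have h2 : Vs.erase none = Vs := Finset.erase_eq_of_notMem hnone
    rcases s.eq_empty_or_nonempty with rfl | hs
    · simp
    · have hn : ∀ i ∈ s, A i ≠ none ∧ B i ≠ none := by
        intro i hi
        constructor
        · intro hA
          exact hnone (Finset.mem_biUnion.2 ⟨i, hi, by rw [← hA]; exact Finset.mem_insert_self _ _⟩)
        · intro hB
          exact hnone (Finset.mem_biUnion.2 ⟨i, hi, by
            rw [← hB]; exact Finset.mem_insert.2 (Or.inr (Finset.mem_singleton_self _))⟩)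
      have h3 : s.card + 1 ≤ Cs.card := subset_card_add_one_le_coords hc hind s hs hn
      have h4 : (Vs.erase none).card = Vs.card := by rw [h2]
      omega


/-- For each root vertex `ρ`, the edges can injectively choose their non-`ρ` endpoints,
necessarily covering all other vertices. -/
lemma exists_root_assignment {c : Fin n → ℝ} {A B : I → Option (Fin n)}
    (hc : ∀ j, c j = 1 ∨ c j = -1)
    (hind : LinearIndependent ℝ (edgeDir c A B))
    (hcard : Fintype.card I = n) (ρ : Option (Fin n)) :
    ∃ g : I → Option (Fin n), (∀ i, g i = A i ∨ g i = B i) ∧ (∀ i, g i ≠ ρ) ∧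
      (∑ i, vvc c (g i)) = sigv c - vvc c ρ := by
  classical
  obtain ⟨g, hginj, hgmem⟩ := (Finset.all_card_le_biUnion_card_iff_exists_injective
    (fun i : I => ({A i, B i} : Finset (Option (Fin n))).erase ρ)).1
    (fun s => hall_bound hc hind ρ s)
  have hgAB : ∀ i, g i = A i ∨ g i = B i := by
    intro i
    have := Finset.mem_of_mem_erase (hgmem i)
    rcases Finset.mem_insert.1 this with h | h
    · exact Or.inl h
    · exact Or.inr (Finset.mem_singleton.1 h)
  have hgne : ∀ i, g i ≠ ρ := fun i => Finset.ne_of_mem_erase (hgmem i)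
  have him : Finset.image g Finset.univ = Finset.univ.erase ρ := by
    apply Finset.eq_of_subset_of_card_le
    · intro o ho
      obtain ⟨i, _, rfl⟩ := Finset.mem_image.1 ho
      exact Finset.mem_erase.2 ⟨hgne i, Finset.mem_univ _⟩
    · rw [Finset.card_erase_of_mem (Finset.mem_univ ρ),
        Finset.card_image_of_injective _ hginj, Finset.card_univ, Finset.card_univ,
        Fintype.card_option, Fintype.card_fin, hcard]
      omega
  have hsum : (∑ i, vvc c (g i)) = ∑ o ∈ Finset.univ.erase ρ, vvc c o := by
    rw [← him, Finset.sum_image (fun x _ y _ h => hginj h)]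
  have htot : (∑ o ∈ Finset.univ.erase ρ, vvc c o) + vvc c ρ = sigv c := by
    rw [Finset.sum_erase_add Finset.univ _ (Finset.mem_univ ρ)]
    rw [show (∑ o : Option (Fin n), vvc c o) = vvc c none + ∑ j : Fin n, vvc c (some j) from
      Fintype.sum_option _]
    simp [sigv]
  exact ⟨g, hgAB, hgne, by rw [hsum, eq_sub_iff_add_eq, htot]⟩

/-- Any `0/1`-corner of the cube is a subsum of the generating simplices. -/
lemma exists_cube_assignment {c : Fin n → ℝ} {A B : I → Option (Fin n)}
    (hspan : ⊤ ≤ Submodule.span ℝ (Set.range (edgeDir c A B))) (K : Finset (Fin n)) :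
    ∃ h : I → (Fin n → ℝ),
      (∀ i, h i ∈ convexHull ℝ ({0, vvc c (A i), vvc c (B i)} : Set (Fin n → ℝ))) ∧
      (∑ i, h i) = ∑ j ∈ K, c j • (Pi.single j 1 : Fin n → ℝ) := by
  classical
  set t : ↥K → Finset I :=
    fun j => Finset.univ.filter (fun i => A i = some j.val ∨ B i = some j.val) with ht
  have hhall : ∀ s : Finset ↥K, s.card ≤ (s.biUnion t).card := by
    intro s
    set K' : Finset (Fin n) := s.image Subtype.val with hK'
    have hsK' : s.card = K'.card :=
      (Finset.card_image_of_injective s Subtype.val_injective).symm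
    set L : (Fin n → ℝ) →ₗ[ℝ] (↥K' → ℝ) := LinearMap.funLeft ℝ ℝ (fun k : ↥K' => (k : Fin n))
      with hL
    have hLsurj : Function.Surjective L :=
      LinearMap.funLeft_surjective_of_injective ℝ ℝ _ Subtype.val_injective
    have hzero : ∀ i, i ∉ s.biUnion t → L (edgeDir c A B i) = 0 := by
      intro i hi
      funext k
      obtain ⟨j, hjs, hjk⟩ := Finset.mem_image.1 k.2
      show edgeDir c A B i k.val = 0
      apply edgeDir_apply_zero
      rw [mem_cI, ← hjk]
      intro hcon
      exact hi (Finset.mem_biUnion.2 ⟨j, hjs, Finset.mem_filter.2 ⟨Finset.mem_univ _, hcon⟩⟩)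
    have hspanL : ⊤ ≤ Submodule.span ℝ (Set.range (fun i => L (edgeDir c A B i))) := by
      have h1 : Submodule.map L (Submodule.span ℝ (Set.range (edgeDir c A B)))
          = Submodule.span ℝ (Set.range (fun i => L (edgeDir c A B i))) := by
        rw [Submodule.map_span]
        congr 1
        rw [← Set.range_comp]
        rfl
      have h2 : Submodule.map L ⊤ ≤ Submodule.map L (Submodule.span ℝ _) :=
        Submodule.map_mono hspan
      rw [h1] at h2
      rwa [Submodule.map_top, LinearMap.range_eq_top.2 hLsurj] at h2
    set Fim : Finset (↥K' → ℝ) := (s.biUnion t).image (fun i => L (edgeDir c A B i)) with hFim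
    have hsub : Set.range (fun i => L (edgeDir c A B i)) ⊆
        insert 0 (Fim : Set (↥K' → ℝ)) := by
      rintro _ ⟨i, rfl⟩
      by_cases hi : i ∈ s.biUnion t
      · exact Set.mem_insert_iff.2 (Or.inr (by
          simp only [hFim, Finset.coe_image, Set.mem_image, Finset.mem_coe]
          exact ⟨i, hi, rfl⟩))
      · exact Set.mem_insert_iff.2 (Or.inl (hzero i hi))
    have hspan2 : ⊤ ≤ Submodule.span ℝ (Fim : Set (↥K' → ℝ)) := by
      refine le_trans hspanL ?_
      have h5 : Submodule.span ℝ (Set.range (fun i => L (edgeDir c A B i))) ≤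
          Submodule.span ℝ (insert 0 (Fim : Set (↥K' → ℝ))) := Submodule.span_mono hsub
      rwa [Submodule.span_insert_zero] at h5
    have hfr : K'.card ≤ Fim.card := by
      have h3 : (Fim : Set (↥K' → ℝ)).finrank ℝ ≤ Fim.card := finrank_span_finset_le_card Fim
      have h4 : Submodule.span ℝ (Fim : Set (↥K' → ℝ)) = ⊤ :=
        le_antisymm le_top hspan2
      rw [Set.finrank, h4, finrank_top] at h3
      rwa [Module.finrank_fintype_fun_eq_card, Fintype.card_coe] at h3
    calc s.card = K'.card := hsK'
      _ ≤ Fim.card := hfr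
      _ ≤ (s.biUnion t).card := by rw [hFim]; exact Finset.card_image_le
  obtain ⟨gK, hginj, hgmem⟩ := (Finset.all_card_le_biUnion_card_iff_exists_injective t).1 hhall
  refine ⟨fun i => ∑ j ∈ Finset.univ.filter (fun j : ↥K => gK j = i),
      c j.val • (Pi.single j.val 1 : Fin n → ℝ), ?_, ?_⟩
  · intro i
    dsimp only
    rcases Finset.eq_empty_or_nonempty (Finset.univ.filter (fun j : ↥K => gK j = i)) with he | hne
    · rw [he, Finset.sum_empty]
      exact subset_convexHull ℝ _ (Set.mem_insert _ _)
    · obtain ⟨j, hj⟩ := hne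
      have hfil : Finset.univ.filter (fun j' : ↥K => gK j' = i) = {j} := by
        apply Finset.eq_singleton_iff_unique_mem.2
        refine ⟨hj, fun j' hj' => ?_⟩
        apply hginj
        rw [(Finset.mem_filter.1 hj').2, (Finset.mem_filter.1 hj).2]
      rw [hfil, Finset.sum_singleton]
      have higK : gK j = i := (Finset.mem_filter.1 hj).2
      have := hgmem j
      rw [higK] at this
      rcases Finset.mem_filter.1 this with ⟨-, hA | hB⟩
      · have : vvc c (A i) = c j.val • (Pi.single j.val 1 : Fin n → ℝ) := by rw [hA]; rfl
        rw [← this]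
        exact subset_convexHull ℝ _ (Set.mem_insert_iff.2 (Or.inr (Set.mem_insert _ _)))
      · have : vvc c (B i) = c j.val • (Pi.single j.val 1 : Fin n → ℝ) := by rw [hB]; rfl
        rw [← this]
        exact subset_convexHull ℝ _ (Set.mem_insert_iff.2 (Or.inr (Set.mem_insert_iff.2
          (Or.inr rfl))))
  · rw [Finset.sum_fiberwise_of_maps_to (fun j _ => Finset.mem_univ (gK j))]
    rw [← Finset.sum_coe_sort K (fun j => c j • (Pi.single j 1 : Fin n → ℝ))]
/-- Leaf extraction: some edge has a coordinate vertex touched by no other edge. -/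
lemma exists_leaf {c : Fin n → ℝ} {A B : I → Option (Fin n)}
    (hc : ∀ j, c j = 1 ∨ c j = -1)
    (hind : LinearIndependent ℝ (edgeDir c A B))
    (F : Finset I) (hF : F.Nonempty) :
    ∃ i ∈ F, ∃ k : Fin n, (A i = some k ∨ B i = some k) ∧
      ∀ i' ∈ F, i' ≠ i → ¬(A i' = some k ∨ B i' = some k) := by
  classical
  by_contra hcon
  push_neg at hcon
  set CF := F.biUnion (cI A B) with hCF
  have hdeg : ∀ k ∈ CF, 2 ≤ (F.filter (fun i => A i = some k ∨ B i = some k)).card := by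
    intro k hk
    obtain ⟨i, hiF, hki⟩ := Finset.mem_biUnion.1 hk
    obtain ⟨i', hi'F, hi'ne, htouch'⟩ := hcon i hiF k (mem_cI.1 hki)
    have h12 : 1 < (F.filter (fun i => A i = some k ∨ B i = some k)).card :=
      Finset.one_lt_card.2 ⟨i, Finset.mem_filter.2 ⟨hiF, mem_cI.1 hki⟩, i',
      Finset.mem_filter.2 ⟨hi'F, htouch'⟩, fun h => hi'ne h.symm⟩
    omega
  have hcount : ∑ k ∈ CF, (F.filter (fun i => A i = some k ∨ B i = some k)).card
      = ∑ i ∈ F, (cI A B i).card := by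
    simp only [Finset.card_filter]
    rw [Finset.sum_comm]
    apply Finset.sum_congr rfl
    intro i hi
    rw [← Finset.card_filter]
    congr 1
    ext k
    simp only [Finset.mem_filter, mem_cI, hCF, Finset.mem_biUnion]
    constructor
    · rintro ⟨-, h⟩; exact h
    · intro h; exact ⟨⟨i, hi, h⟩, h⟩
  have hlb : 2 * CF.card ≤ ∑ k ∈ CF, (F.filter (fun i => A i = some k ∨ B i = some k)).card := by
    calc 2 * CF.card = ∑ _k ∈ CF, 2 := by rw [Finset.sum_const, smul_eq_mul, mul_comm]
      _ ≤ _ := Finset.sum_le_sum hdeg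
  by_cases hnone : ∀ i ∈ F, A i ≠ none ∧ B i ≠ none
  · have h2 : F.card + 1 ≤ CF.card := subset_card_add_one_le_coords hc hind F hF hnone
    have h3 : ∑ i ∈ F, (cI A B i).card ≤ 2 * F.card := by
      calc ∑ i ∈ F, (cI A B i).card ≤ ∑ _i ∈ F, 2 := Finset.sum_le_sum
            (fun i _ => cI_card_le_two A B i)
        _ = 2 * F.card := by rw [Finset.sum_const, smul_eq_mul, mul_comm]
    omega
  · push_neg at hnone
    obtain ⟨i₀, hi₀F, hi₀⟩ := hnone
    have hi₀' : A i₀ = none ∨ B i₀ = none := by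
      by_cases hA : A i₀ = none
      · exact Or.inl hA
      · exact Or.inr (hi₀ hA)
    have h4 : ∑ i ∈ F, (cI A B i).card ≤ 2 * F.card - 1 := by
      have hsplit : ∑ i ∈ F.erase i₀, (cI A B i).card + (cI A B i₀).card
          = ∑ i ∈ F, (cI A B i).card := Finset.sum_erase_add F _ hi₀F
      have hb1 : ∑ i ∈ F.erase i₀, (cI A B i).card ≤ 2 * (F.card - 1) := by
        calc ∑ i ∈ F.erase i₀, (cI A B i).card ≤ ∑ _i ∈ F.erase i₀, 2 :=
              Finset.sum_le_sum (fun i _ => cI_card_le_two A B i)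
          _ = 2 * (F.card - 1) := by
              rw [Finset.sum_const, smul_eq_mul, mul_comm, Finset.card_erase_of_mem hi₀F]
      have hb2 : (cI A B i₀).card ≤ 1 := cI_card_le_one hi₀'
      have hFpos : 1 ≤ F.card := Finset.card_pos.2 hF
      omega
    have h5 : F.card ≤ CF.card := subset_card_le_coords hind F
    have hFpos : 1 ≤ F.card := Finset.card_pos.2 hF
    omega

lemma segment_apply_zero {c : Fin n → ℝ} {a b : Option (Fin n)} {y : Fin n → ℝ} {k : Fin n}
    (hy : y ∈ segment ℝ (vvc c a) (vvc c b)) (ha : a ≠ some k) (hb : b ≠ some k) :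
    y k = 0 := by
  obtain ⟨ta, tb, _, _, _, rfl⟩ := hy
  have h1 : vvc c a k = 0 := vvc_apply_ne c ha
  have h2 : vvc c b k = 0 := vvc_apply_ne c hb
  simp [h1, h2]

/-- If a point of a segment between two vertex vectors has an integral distinguished
coordinate, it is an endpoint. -/
lemma segment_int_endpoint {c : Fin n → ℝ} (hc : ∀ j, c j = 1 ∨ c j = -1)
    {a b : Option (Fin n)} {y : Fin n → ℝ} {k : Fin n}
    (hy : y ∈ segment ℝ (vvc c a) (vvc c b)) (hk : a = some k ∨ b = some k) (hne : a ≠ b)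
    (hint : ∃ q : ℤ, y k = (q : ℝ)) :
    y = vvc c a ∨ y = vvc c b := by
  obtain ⟨ta, tb, hta, htb, htab, hy_eq⟩ := hy
  -- handle the case `a = some k`; the other case is symmetric in (a,ta) ↔ (b,tb)
  have main : ∀ (a' b' : Option (Fin n)) (ta' tb' : ℝ), 0 ≤ ta' → 0 ≤ tb' → ta' + tb' = 1 →
      a' = some k → b' ≠ some k → (∃ q : ℤ, (ta' • vvc c a' + tb' • vvc c b') k = (q : ℝ)) →
      ta' • vvc c a' + tb' • vvc c b' = vvc c a' ∨ ta' • vvc c a' + tb' • vvc c b' = vvc c b' := by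
    intro a' b' ta' tb' hta' htb' htab' ha' hb' hint'
    obtain ⟨q, hq⟩ := hint'
    have hyk : (ta' • vvc c a' + tb' • vvc c b') k = ta' * c k := by
      rw [ha']
      have h2 : vvc c b' k = 0 := vvc_apply_ne c hb'
      simp [vvc_apply_self, h2]
    have htaint : ∃ q' : ℤ, ta' = (q' : ℝ) := by
      rcases hc k with h | h
      · exact ⟨q, by rw [← hq, hyk, h, mul_one]⟩
      · exact ⟨-q, by rw [hyk, h] at hq; push_cast; linarith⟩
    obtain ⟨q', hq'⟩ := htaint
    have hta1 : ta' ≤ 1 := by linarith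
    have hq'01 : q' = 0 ∨ q' = 1 := by
      have h0 : (0 : ℝ) ≤ q' := by rw [← hq']; exact hta'
      have h1 : (q' : ℝ) ≤ 1 := by rw [← hq']; exact hta1
      have h0' : (0 : ℤ) ≤ q' := by exact_mod_cast h0
      have h1' : q' ≤ 1 := by exact_mod_cast h1
      omega
    rcases hq'01 with h | h
    · right
      have hta0 : ta' = 0 := by rw [hq', h]; norm_num
      have htb1 : tb' = 1 := by linarith
      rw [hta0, htb1, zero_smul, one_smul, zero_add]
    · left
      have hta1' : ta' = 1 := by rw [hq', h]; norm_num
      have htb0 : tb' = 0 := by linarith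
      rw [hta1', htb0, zero_smul, one_smul, add_zero]
  rcases hk with hk | hk
  · have hbk : b ≠ some k := fun h => hne (hk.trans h.symm)
    rw [← hy_eq]
    exact main a b ta tb hta htb htab hk hbk (by rwa [hy_eq])
  · have hak : a ≠ some k := fun h => hne (h.trans hk.symm)
    rw [← hy_eq]
    have := main b a tb ta htb hta (by linarith) hk hak
      (by rw [show tb • vvc c b + ta • vvc c a = ta • vvc c a + tb • vvc c b from add_comm _ _,
        hy_eq]; exact hint)
    rw [show tb • vvc c b + ta • vvc c a = ta • vvc c a + tb • vvc c b from add_comm _ _] at this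
    exact this.symm

/-- Integral points of the zonotope decompose as sums of endpoints. -/
lemma lattice_decomp {c : Fin n → ℝ} {A B : I → Option (Fin n)}
    (hc : ∀ j, c j = 1 ∨ c j = -1) (hABne : ∀ i, A i ≠ B i)
    (hind : LinearIndependent ℝ (edgeDir c A B)) :
    ∀ F : Finset I, ∀ z : Fin n → ℝ,
      z ∈ ∑ i ∈ F, segment ℝ (vvc c (A i)) (vvc c (B i)) → IsIntVec z →
      ∃ h : I → Option (Fin n), (∀ i, h i = A i ∨ h i = B i) ∧ z = ∑ i ∈ F, vvc c (h i) := by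
  classical
  intro F
  induction F using Finset.strongInduction with
  | _ F IH =>
    intro z hz hint
    rcases F.eq_empty_or_nonempty with rfl | hF
    · refine ⟨A, fun i => Or.inl rfl, ?_⟩
      rw [Finset.sum_empty] at hz ⊢
      exact Set.mem_zero.1 hz
    · obtain ⟨i₀, hi₀F, k₀, hk₀, hleaf⟩ := exists_leaf hc hind F hF
      rw [← Finset.sum_erase_add F _ hi₀F] at hz
      obtain ⟨r, hr, y, hy, hzsum⟩ := Set.mem_add.1 hz
      have hrk : r k₀ = 0 := by
        obtain ⟨gf, hgf, hgfr⟩ := (Set.mem_finset_sum _ _ _).1 hr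
        rw [← hgfr, Finset.sum_apply]
        apply Finset.sum_eq_zero
        intro i hi
        have hi' := Finset.mem_erase.1 hi
        have hnt := hleaf i hi'.2 hi'.1
        push_neg at hnt
        exact segment_apply_zero (hgf hi) hnt.1 hnt.2
      have hyk : ∃ q : ℤ, y k₀ = (q : ℝ) := by
        obtain ⟨q, hq⟩ := hint k₀
        refine ⟨q, ?_⟩
        rw [← hzsum] at hq
        simpa [hrk] using hq
      have hyend := segment_int_endpoint hc hy hk₀ (hABne i₀) hyk
      have hzr : r = z - y := by rw [← hzsum]; abel
      have hrint : IsIntVec r := by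
        rw [hzr]
        rcases hyend with h | h <;> rw [h]
        · exact hint.sub (IsIntVec.vvc hc _)
        · exact hint.sub (IsIntVec.vvc hc _)
      obtain ⟨h', hh'1, hh'2⟩ := IH (F.erase i₀) (Finset.erase_ssubset hi₀F) r hr hrint
      set o : Option (Fin n) := if y = vvc c (A i₀) then A i₀ else B i₀ with ho
      have hyo : y = vvc c o := by
        rw [ho]
        rcases hyend with h | h
        · rw [if_pos h]; exact h
        · by_cases h2 : y = vvc c (A i₀)
          · rw [if_pos h2]; exact h2
          · rw [if_neg h2]; exact h
      have hoAB : o = A i₀ ∨ o = B i₀ := by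
        rw [ho]; split
        · exact Or.inl rfl
        · exact Or.inr rfl
      refine ⟨Function.update h' i₀ o, ?_, ?_⟩
      · intro i
        by_cases hii : i = i₀
        · subst hii; rw [Function.update_self]; exact hoAB
        · rw [Function.update_of_ne hii]; exact hh'1 i
      · rw [← Finset.sum_erase_add F _ hi₀F, ← hzsum]
        congr 1
        · rw [hh'2]
          apply Finset.sum_congr rfl
          intro i hi
          rw [Function.update_of_ne (Finset.mem_erase.1 hi).1]
        · rw [Function.update_self, hyo]
/-- Uniqueness core: an integral vector `dd` such that `dd + (σ - v_ρ)` lies in the zonotope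
for every root `ρ` must vanish. -/
lemma unique_core {c : Fin n → ℝ} {A B : I → Option (Fin n)}
    (hc : ∀ j, c j = 1 ∨ c j = -1) (hABne : ∀ i, A i ≠ B i)
    (hind : LinearIndependent ℝ (edgeDir c A B)) (hcard : Fintype.card I = n)
    (dd : Fin n → ℝ) (hdd : IsIntVec dd)
    (H : ∀ ρ : Option (Fin n),
      dd + (sigv c - vvc c ρ) ∈ ∑ i : I, segment ℝ (vvc c (A i)) (vvc c (B i))) :
    dd = 0 := by
  classical
  have hint : ∀ ρ : Option (Fin n), IsIntVec (dd + (sigv c - vvc c ρ)) :=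
    fun ρ => hdd.add ((IsIntVec.sigv hc).sub (IsIntVec.vvc hc ρ))
  choose hf hf_mem hf_eq using fun ρ : Option (Fin n) =>
    lattice_decomp hc hABne hind Finset.univ _ (H ρ) (hint ρ)
  choose g hg1 hg2 hg3 using fun ρ : Option (Fin n) =>
    exists_root_assignment hc hind hcard ρ
  set θ : Option (Fin n) → I → ℝ := fun ρ i =>
    (if hf ρ i = B i then (1:ℝ) else 0) - (if g ρ i = B i then (1:ℝ) else 0) with hθ
  have key : ∀ ρ, dd = ∑ i, θ ρ i • edgeDir c A B i := by
    intro ρ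
    have h1 : dd = (∑ i, vvc c (hf ρ i)) - (∑ i, vvc c (g ρ i)) := by
      rw [hg3 ρ, ← hf_eq ρ]
      abel
    rw [h1, ← Finset.sum_sub_distrib]
    apply Finset.sum_congr rfl
    intro i _
    rcases hf_mem ρ i with h | h <;> rcases hg1 ρ i with h' | h' <;>
        rw [hθ] <;> simp only [] <;> rw [h, h'] <;> unfold edgeDir <;>
        simp only [if_neg (hABne i), if_pos rfl, if_true] <;> module
  have hθconst : ∀ ρ₁ ρ₂ i, θ ρ₁ i = θ ρ₂ i := by
    intro ρ₁ ρ₂ i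
    have h0 : ∑ i, (θ ρ₁ i - θ ρ₂ i) • edgeDir c A B i = 0 := by
      simp only [sub_smul]
      rw [Finset.sum_sub_distrib, ← key ρ₁, ← key ρ₂, sub_self]
    have := Fintype.linearIndependent_iff.1 hind _ h0 i
    linarith [this]
  have hθ0 : ∀ i, θ none i = 0 := by
    intro i
    have hgA : g (A i) i = B i := by
      rcases hg1 (A i) i with h | h
      · exact absurd h (hg2 (A i) i)
      · exact h
    have hgB : g (B i) i = A i := by
      rcases hg1 (B i) i with h | h
      · exact h
      · exact absurd h (hg2 (B i) i)
    have h1 : θ (A i) i ≤ 0 := by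
      rw [hθ]
      simp only []
      rw [hgA, if_pos rfl]
      split <;> norm_num
    have h2 : 0 ≤ θ (B i) i := by
      rw [hθ]
      simp only []
      rw [hgB, if_neg (hABne i)]
      split <;> norm_num
    have ha := hθconst none (A i) i
    have hb := hθconst none (B i) i
    linarith
  rw [key none]
  apply Finset.sum_eq_zero
  intro i _
  rw [hθ0 i, zero_smul]
end Edges

lemma convex_finsetSum {ι : Type*} (s : Finset ι) (f : ι → Set (Fin n → ℝ))
    (h : ∀ i ∈ s, Convex ℝ (f i)) : Convex ℝ (∑ i ∈ s, f i) := by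
  classical
  induction s using Finset.cons_induction with
  | empty =>
      rw [Finset.sum_empty, ← Set.singleton_zero]
      exact convex_singleton 0
  | cons a s ha ih =>
      rw [Finset.sum_cons]
      exact (h a (Finset.mem_cons_self a s)).add (ih fun i hi => h i (Finset.mem_cons_of_mem hi))

lemma finsetSum_set_subset {ι : Type*} (s : Finset ι) (f g : ι → Set (Fin n → ℝ))
    (h : ∀ i ∈ s, f i ⊆ g i) : ∑ i ∈ s, f i ⊆ ∑ i ∈ s, g i := by
  classical
  induction s using Finset.cons_induction with
  | empty => simp
  | cons a s ha ih =>
      rw [Finset.sum_cons, Finset.sum_cons]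
      exact Set.add_subset_add (h a (Finset.mem_cons_self a s))
        (ih fun i hi => h i (Finset.mem_cons_of_mem hi))

lemma finsetSum_convexHull {ι : Type*} (s : Finset ι) (f : ι → Set (Fin n → ℝ)) :
    ∑ i ∈ s, convexHull ℝ (f i) = convexHull ℝ (∑ i ∈ s, f i) := by
  classical
  induction s using Finset.cons_induction with
  | empty =>
      rw [Finset.sum_empty, Finset.sum_empty, ← Set.singleton_zero, convexHull_singleton]
  | cons a s ha ih =>
      rw [Finset.sum_cons, Finset.sum_cons, ih, convexHull_add]

end Stmt7Aux


open Stmt7Aux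

/-- With `P_T = Δ⁰_{S_1∩T} + ⋯ + Δ⁰_{S_m∩T}` `n`-dimensional, a fine mixed cell
`Π = conv(E_1) + ⋯ + conv(E_m)` of `P_T`, `Π̂ := Σ_{|E_i| ≥ 2} conv(E_i)` and `x := Σ_{|E_i|=1} w_i`
(so `Π = x + Π̂`), the following are equivalent: (1) `∇_T ⊆ Π̂`; (2) `x ∈ (P_T − □_T) ∩ ℤ^n` and
`x` is the unique point `u` of `(P_T − □_T) ∩ ℤ^n` with `u + ∇_T ⊆ Π`; (3) every `|E_i| ≤ 2`,
i.e. `Π` is a zonotope. -/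
theorem stmt7 (n m : ℕ) (S : Fin m → Finset (Fin n × Bool)) (hS : ∀ i, Adm n (S i))
    (T : Finset (Fin n × Bool)) (hT : AdSn n T)
    (PT : Set (Fin n → ℝ)) (hPT : PT = ∑ i : Fin m, simp0 n (S i ∩ T))
    (hPdim : affineSpan ℝ PT = ⊤)
    (E : Fin m → Finset (Option (Fin n × Bool)))
    (hE1 : ∀ i, (E i).Nonempty)
    (hE2 : ∀ i, E i ⊆ insert none ((S i ∩ T).image some))
    (hE3 : (∑ i, ((E i).card - 1)) = n)
    (Pcell : Set (Fin n → ℝ))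
    (hPcell : Pcell = ∑ i : Fin m, convexHull ℝ (vec0 n '' ↑(E i)))
    (hdim : affineSpan ℝ Pcell = ⊤)
    (Phat : Set (Fin n → ℝ))
    (hPhat : Phat = ∑ i ∈ Finset.univ.filter (fun i => 2 ≤ (E i).card),
      convexHull ℝ (vec0 n '' ↑(E i)))
    (x : Fin n → ℝ)
    (hx : ({x} : Set (Fin n → ℝ)) = ∑ i ∈ Finset.univ.filter (fun i => (E i).card = 1),
      convexHull ℝ (vec0 n '' ↑(E i)))
    (hxPi : Pcell = x +ᵥ Phat) :
    ((nablaT n T ⊆ Phat) ↔ (∀ i, (E i).card ≤ 2)) ∧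
    ((x ∈ mdiff PT (cubeT n T) ∩ latt n ∧ x +ᵥ nablaT n T ⊆ Pcell ∧
        ∀ u ∈ mdiff PT (cubeT n T) ∩ latt n, u +ᵥ nablaT n T ⊆ Pcell → u = x) ↔
      (∀ i, (E i).card ≤ 2)) := by
  classical
  set I2f : Finset (Fin m) := Finset.univ.filter (fun i => 2 ≤ (E i).card) with hI2f
  set I1f : Finset (Fin m) := Finset.univ.filter (fun i => (E i).card = 1) with hI1f
  -- ### sign setup
  have hone := hT.2.2
  have hfst_injOn : ∀ p ∈ T, ∀ q ∈ T, p.1 = q.1 → p = q := by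
    rintro ⟨j1, b1⟩ h1 ⟨j2, b2⟩ h2 h
    simp only at h
    subst h
    suffices hb : b1 = b2 by rw [hb]
    cases b1 <;> cases b2
    · rfl
    · exact absurd ⟨h2, h1⟩ (hone j1)
    · exact absurd ⟨h1, h2⟩ (hone j1)
    · rfl
  have himT : T.image Prod.fst = Finset.univ := by
    apply Finset.eq_univ_of_card
    rw [Finset.card_image_of_injOn
      (fun p hp q hq h => hfst_injOn p (Finset.mem_coe.1 hp) q (Finset.mem_coe.1 hq) h),
      hT.1, Fintype.card_fin]
  have hsurj : ∀ j : Fin n, ∃ b : Bool, (j, b) ∈ T := by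
    intro j
    have hj : j ∈ T.image Prod.fst := by rw [himT]; exact Finset.mem_univ j
    obtain ⟨p, hp, hpj⟩ := Finset.mem_image.1 hj
    exact ⟨p.2, by rw [show (j, p.2) = p from Prod.ext_iff.2 ⟨hpj.symm, rfl⟩]; exact hp⟩
  choose ε hε using hsurj
  have hTmem : ∀ p : Fin n × Bool, p ∈ T ↔ p.2 = ε p.1 := by
    intro p
    constructor
    · intro hp
      exact congrArg Prod.snd (hfst_injOn p hp (p.1, ε p.1) (hε p.1) rfl)
    · intro hp
      have hpe : p = (p.1, ε p.1) := Prod.ext_iff.2 ⟨rfl, hp⟩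
      rw [hpe]; exact hε p.1
  set c : Fin n → ℝ := fun j => if ε j then 1 else -1 with hc_def
  have hc : ∀ j, c j = 1 ∨ c j = -1 := by
    intro j
    by_cases h : ε j
    · exact Or.inl (by simp [hc_def, h])
    · exact Or.inr (by simp [hc_def, h])
  have hsgn : ∀ j, sgnVec n (j, ε j) = c j • (Pi.single j 1 : Fin n → ℝ) := by
    intro j
    unfold sgnVec
    by_cases h : ε j <;> simp [h, hc_def]
  have hTim : T = Finset.image (fun j => (j, ε j)) Finset.univ := by
    ext p
    simp only [Finset.mem_image, Finset.mem_univ, true_and]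
    rw [hTmem p]
    constructor
    · intro h; exact ⟨p.1, (Prod.ext_iff.2 ⟨rfl, h⟩ : p = (p.1, ε p.1)).symm⟩
    · rintro ⟨a, ha⟩
      rw [← ha]
  have hinj_univ : ∀ a ∈ Finset.univ, ∀ b ∈ Finset.univ,
      ((a : Fin n), ε a) = (b, ε b) → a = b := by
    intro a _ b _ h
    exact congrArg Prod.fst h
  have hsigmaT : sigmaT n T = sigv c := by
    unfold sigmaT sigv
    rw [hTim, Finset.sum_image hinj_univ]
    exact Finset.sum_congr rfl (fun j _ => hsgn j)
  have hvec0 : ∀ i : Fin m, ∀ o ∈ E i, vec0 n o = vvc c (Option.map Prod.fst o) := by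
    intro i o ho
    cases o with
    | none => rfl
    | some p =>
        have hp : p ∈ S i ∩ T := by
          have := hE2 i ho
          rcases Finset.mem_insert.1 this with h | h
          · exact absurd h (by simp)
          · obtain ⟨q, hq, hqp⟩ := Finset.mem_image.1 h
            rwa [← Option.some_injective _ hqp]
        have hpT : p ∈ T := (Finset.mem_inter.1 hp).2
        have hpe : p = (p.1, ε p.1) := Prod.ext_iff.2 ⟨rfl, (hTmem p).1 hpT⟩
        show sgnVec n p = vvc c (some p.1)
        rw [vvc_some, ← hsgn p.1]
        conv_lhs => rw [hpe]
  have hvecint : ∀ o : Option (Fin n × Bool), IsIntVec (vec0 n o) := by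
    rintro (_ | p)
    · exact IsIntVec.zero
    · intro k
      show ∃ q : ℤ, sgnVec n p k = (q : ℝ)
      unfold sgnVec
      by_cases h2 : p.2 <;> by_cases hk : k = p.1
      · exact ⟨1, by simp [h2, hk, Pi.single_apply]⟩
      · exact ⟨0, by simp [h2, Pi.single_apply, hk]⟩
      · exact ⟨-1, by simp [h2, hk, Pi.single_apply]⟩
      · exact ⟨0, by simp [h2, Pi.single_apply, hk]⟩
  have hvert_mem : ∀ i : Fin m, ∀ o ∈ E i,
      vec0 n o ∈ ({0} : Set (Fin n → ℝ)) ∪ sgnVec n '' ↑(S i ∩ T) := by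
    intro i o ho
    cases o with
    | none => exact Or.inl rfl
    | some p =>
        have hp : p ∈ S i ∩ T := by
          have := hE2 i ho
          rcases Finset.mem_insert.1 this with h | h
          · exact absurd h (by simp)
          · obtain ⟨q, hq, hqp⟩ := Finset.mem_image.1 h
            rwa [← Option.some_injective _ hqp]
        exact Or.inr ⟨p, Finset.mem_coe.2 hp, rfl⟩
  have hsub_simp : ∀ i : Fin m, convexHull ℝ (vec0 n '' ↑(E i)) ⊆ simp0 n (S i ∩ T) := by
    intro i
    apply convexHull_mono
    rintro _ ⟨o, ho, rfl⟩
    exact hvert_mem i o (Finset.mem_coe.1 ho)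
  -- ### membership and integrality of x
  have hx_mem : x ∈ ∑ i ∈ I1f, convexHull ℝ (vec0 n '' ↑(E i)) := by
    rw [← hx]; exact rfl
  have hxdecomp : ∀ i ∈ I1f, ∃ o : Option (Fin n × Bool), E i = {o} := by
    intro i hi
    exact Finset.card_eq_one.1 (Finset.mem_filter.1 hi).2
  have hxint : IsIntVec x := by
    obtain ⟨yf, hyf, hsum⟩ := (Set.mem_finset_sum _ _ _).1 hx_mem
    rw [← hsum]
    apply IsIntVec.finsetSum
    intro i hi
    obtain ⟨o, ho⟩ := hxdecomp i hi
    have : convexHull ℝ (vec0 n '' ↑(E i)) = {vec0 n o} := by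
      rw [ho, Finset.coe_singleton, Set.image_singleton, convexHull_singleton]
    have hyi := hyf hi
    rw [this] at hyi
    rw [hyi]
    exact hvecint o
  -- ### key A: `σ ∈ Phat → (3)`
  have keyA : sigv c ∈ Phat → ∀ i : Fin m, (E i).card ≤ 2 := by
    intro hσ
    by_contra hcon
    push_neg at hcon
    obtain ⟨i₀, hi₀⟩ := hcon
    have hBound : ∀ i : Fin m, ∀ y ∈ convexHull ℝ (vec0 n '' ↑(E i)), fl c y ≤ 1 := by
      intro i y hy
      have hsubset : vec0 n '' ↑(E i) ⊆ {w | fl c w ≤ 1} := by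
        rintro _ ⟨o, ho, rfl⟩
        have ho' := Finset.mem_coe.1 ho
        rw [hvec0 i o ho']
        cases o with
        | none => show fl c (vvc c none) ≤ 1; rw [vvc_none, map_zero]; norm_num
        | some p =>
            show fl c (vvc c (some p.1)) ≤ 1
            rw [fl_vvc_some c hc]
      have hconv : Convex ℝ {w | fl c w ≤ 1} := convex_halfSpace_le (fl c).isLinear 1
      exact convexHull_min hsubset hconv hy
    rw [hPhat] at hσ
    obtain ⟨yf, hyf, hsum⟩ := (Set.mem_finset_sum _ _ _).1 hσ
    have hle : (n : ℝ) ≤ (I2f.card : ℝ) := by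
      rw [← fl_sigv c hc, ← hsum, map_sum]
      calc ∑ i ∈ I2f, fl c (yf i) ≤ ∑ _i ∈ I2f, (1 : ℝ) :=
            Finset.sum_le_sum (fun i hi => hBound i _ (hyf hi))
        _ = I2f.card := by simp
    have hlen : n ≤ I2f.card := by exact_mod_cast hle
    have hstrict : I2f.card < ∑ i ∈ I2f, ((E i).card - 1) := by
      have h := Finset.sum_lt_sum (s := I2f) (f := fun _ => 1) (g := fun i => (E i).card - 1)
        (fun i hi => by
          have := (Finset.mem_filter.1 hi).2
          show (1:ℕ) ≤ (E i).card - 1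
          omega)
        ⟨i₀, Finset.mem_filter.2 ⟨Finset.mem_univ _, by omega⟩, by
          show (1:ℕ) < (E i₀).card - 1
          omega⟩
      simpa using h
    have hsumle : ∑ i ∈ I2f, ((E i).card - 1) ≤ ∑ i : Fin m, ((E i).card - 1) :=
      Finset.sum_le_sum_of_subset (Finset.filter_subset _ _)
    rw [hE3] at hsumle
    omega
  -- σ is a generator of ∇
  have hσ_nabla : sigmaT n T ∈ nablaT n T :=
    subset_convexHull ℝ _ (Or.inl rfl)

  -- ### main block under hypothesis (3)
  have main : (∀ i : Fin m, (E i).card ≤ 2) →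
      (nablaT n T ⊆ Phat) ∧ (∀ b ∈ cubeT n T, x + b ∈ PT) ∧
      (∀ u : Fin n → ℝ, IsIntVec u → u +ᵥ nablaT n T ⊆ Pcell → u = x) := by
    intro h3
    have hcard2 : ∀ i ∈ I2f, (E i).card = 2 :=
      fun i hi => le_antisymm (h3 i) (Finset.mem_filter.1 hi).2
    have hcard1 : ∀ i : Fin m, i ∉ I2f → (E i).card = 1 := by
      intro i hi
      have h1 := (hE1 i).card_pos
      have h2 : ¬ 2 ≤ (E i).card := fun h => hi (Finset.mem_filter.2 ⟨Finset.mem_univ _, h⟩)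
      omega
    have hPQ : ∀ i : ↥I2f, ∃ p q : Option (Fin n × Bool), p ≠ q ∧ E i.val = {p, q} :=
      fun i => Finset.card_eq_two.1 (hcard2 i.val i.2)
    choose P Q hPQne hEPQ using hPQ
    set A : ↥I2f → Option (Fin n) := fun i => (P i).map Prod.fst with hAdef
    set B : ↥I2f → Option (Fin n) := fun i => (Q i).map Prod.fst with hBdef
    have hPmem : ∀ i : ↥I2f, P i ∈ E i.val := fun i => by
      rw [hEPQ i]; exact Finset.mem_insert_self _ _
    have hQmem : ∀ i : ↥I2f, Q i ∈ E i.val := fun i => by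
      rw [hEPQ i]; exact Finset.mem_insert.2 (Or.inr (Finset.mem_singleton_self _))
    have hE2' : ∀ i : Fin m, ∀ p : Fin n × Bool, some p ∈ E i → p ∈ S i ∩ T := by
      intro i p hp
      have := hE2 i hp
      rcases Finset.mem_insert.1 this with h | h
      · exact absurd h (by simp)
      · obtain ⟨q, hq, hqp⟩ := Finset.mem_image.1 h
        rwa [← Option.some_injective _ hqp]
    have hproj_inj : ∀ i : Fin m, ∀ o1 ∈ E i, ∀ o2 ∈ E i,
        o1.map Prod.fst = o2.map Prod.fst → o1 = o2 := by
      intro i o1 h1 o2 h2 heq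
      cases o1 with
      | none =>
          cases o2 with
          | none => rfl
          | some q => simp at heq
      | some p =>
          cases o2 with
          | none => simp at heq
          | some q =>
              simp only [Option.map_some] at heq
              have hpfst : p.1 = q.1 := Option.some_injective _ heq
              have hpT : p ∈ T := (Finset.mem_inter.1 (hE2' i p h1)).2
              have hqT : q ∈ T := (Finset.mem_inter.1 (hE2' i q h2)).2
              have : p = q := Prod.ext_iff.2 ⟨hpfst, by
                rw [(hTmem p).1 hpT, (hTmem q).1 hqT, hpfst]⟩
              rw [this]
    have hABne : ∀ i : ↥I2f, A i ≠ B i := fun i h =>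
      hPQne i (hproj_inj i.val _ (hPmem i) _ (hQmem i) h)
    have hvA : ∀ i : ↥I2f, vec0 n (P i) = vvc c (A i) := fun i => hvec0 i.val _ (hPmem i)
    have hvB : ∀ i : ↥I2f, vec0 n (Q i) = vvc c (B i) := fun i => hvec0 i.val _ (hQmem i)
    have hsegEq : ∀ i : ↥I2f, convexHull ℝ (vec0 n '' ↑(E i.val))
        = segment ℝ (vvc c (A i)) (vvc c (B i)) := by
      intro i
      rw [hEPQ i, Finset.coe_insert, Finset.coe_singleton, Set.image_insert_eq,
        Set.image_singleton, hvA i, hvB i, convexHull_pair]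
    have hPhatseg : Phat = ∑ i : ↥I2f, segment ℝ (vvc c (A i)) (vvc c (B i)) := by
      rw [hPhat, ← Finset.sum_coe_sort I2f]
      exact Finset.sum_congr rfl (fun i _ => hsegEq i)
    have hcardI : Fintype.card ↥I2f = n := by
      rw [Fintype.card_coe]
      have hsplit := Finset.sum_filter_add_sum_filter_not Finset.univ
        (fun i => 2 ≤ (E i).card) (fun i => (E i).card - 1)
      rw [← hI2f] at hsplit
      have h1 : ∑ i ∈ I2f, ((E i).card - 1) = I2f.card := by
        rw [Finset.sum_congr rfl (fun i hi => by rw [hcard2 i hi])]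
        simp
      have h2 : ∑ i ∈ Finset.univ.filter (fun i => ¬ 2 ≤ (E i).card), ((E i).card - 1) = 0 := by
        apply Finset.sum_eq_zero
        intro i hi
        have hii : i ∉ I2f := by
          intro hmem
          exact (Finset.mem_filter.1 hi).2 (Finset.mem_filter.1 hmem).2
        rw [hcard1 i hii]
        omega
      rw [h1, h2, hE3] at hsplit
      omega
    have hfinrank : Fintype.card ↥I2f = Module.finrank ℝ (Fin n → ℝ) := by
      rw [hcardI, Module.finrank_fintype_fun_eq_card, Fintype.card_fin]
    have hdiffspan : ∀ p ∈ Pcell, ∀ q ∈ Pcell,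
        p - q ∈ Submodule.span ℝ (Set.range (edgeDir c A B)) := by
      intro p hp q hq
      rw [hPcell] at hp hq
      obtain ⟨pf, hpf, hpsum⟩ := (Set.mem_finset_sum _ _ _).1 hp
      obtain ⟨qf, hqf, hqsum⟩ := (Set.mem_finset_sum _ _ _).1 hq
      rw [← hpsum, ← hqsum, ← Finset.sum_sub_distrib]
      apply Submodule.sum_mem
      intro i _
      by_cases hi : i ∈ I2f
      · have hpi := hpf (Finset.mem_univ i)
        have hqi := hqf (Finset.mem_univ i)
        rw [hsegEq ⟨i, hi⟩, segment_eq_image'] at hpi hqi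
        obtain ⟨t, ht, hteq⟩ := hpi
        obtain ⟨s, hs, hseq⟩ := hqi
        rw [← hteq, ← hseq]
        have heq : (vvc c (A ⟨i, hi⟩) + t • (vvc c (B ⟨i, hi⟩) - vvc c (A ⟨i, hi⟩)))
            - (vvc c (A ⟨i, hi⟩) + s • (vvc c (B ⟨i, hi⟩) - vvc c (A ⟨i, hi⟩)))
            = (t - s) • edgeDir c A B ⟨i, hi⟩ := by
          unfold edgeDir
          module
        rw [heq]
        exact Submodule.smul_mem _ _ (Submodule.subset_span ⟨⟨i, hi⟩, rfl⟩)
      · obtain ⟨o, ho⟩ := Finset.card_eq_one.1 (hcard1 i hi)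
        have hsing : convexHull ℝ (vec0 n '' ↑(E i)) = {vec0 n o} := by
          rw [ho, Finset.coe_singleton, Set.image_singleton, convexHull_singleton]
        have hpi := hpf (Finset.mem_univ i)
        have hqi := hqf (Finset.mem_univ i)
        rw [hsing] at hpi hqi
        rw [Set.mem_singleton_iff.1 hpi, Set.mem_singleton_iff.1 hqi, sub_self]
        exact Submodule.zero_mem _
    have hspan : ⊤ ≤ Submodule.span ℝ (Set.range (edgeDir c A B)) := by
      have h1 : vectorSpan ℝ Pcell = ⊤ := by
        rw [← direction_affineSpan, hdim]
        exact AffineSubspace.direction_top ℝ _ _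
      rw [← h1, vectorSpan_def]
      apply Submodule.span_le.2
      rintro w ⟨p, hp, q, hq, rfl⟩
      exact hdiffspan p hp q hq
    have hind : LinearIndependent ℝ (edgeDir c A B) :=
      linearIndependent_of_top_le_span_of_card_eq_finrank hspan hfinrank
    -- (1): ∇ ⊆ Π̂
    have hBpart : nablaT n T ⊆ Phat := by
      unfold nablaT
      apply convexHull_min
      · rintro w (hw | ⟨p, hpT, rfl⟩)
        · rw [Set.mem_singleton_iff.1 hw, hsigmaT]
          obtain ⟨g, hg1, hg2, hg3⟩ := exists_root_assignment hc hind hcardI none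
          rw [hPhatseg]
          have hσeq : sigv c = ∑ i : ↥I2f, vvc c (g i) := by
            rw [hg3, vvc_none, sub_zero]
          rw [hσeq]
          exact Set.finset_sum_mem_finset_sum _ _ _ (fun i _ => by
            rcases hg1 i with h | h <;> rw [h]
            · exact left_mem_segment ℝ _ _
            · exact right_mem_segment ℝ _ _)
        · show sigmaT n T - sgnVec n p ∈ Phat
          have hpe : p = (p.1, ε p.1) :=
            Prod.ext_iff.2 ⟨rfl, (hTmem p).1 (Finset.mem_coe.1 hpT)⟩
          obtain ⟨g, hg1, hg2, hg3⟩ := exists_root_assignment hc hind hcardI (some p.1)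
          rw [hPhatseg]
          have heq : sigmaT n T - sgnVec n p = ∑ i : ↥I2f, vvc c (g i) := by
            rw [hg3, hsigmaT]
            congr 1
            rw [vvc_some, ← hsgn p.1]
            conv_lhs => rw [hpe]
          rw [heq]
          exact Set.finset_sum_mem_finset_sum _ _ _ (fun i _ => by
            rcases hg1 i with h | h <;> rw [h]
            · exact left_mem_segment ℝ _ _
            · exact right_mem_segment ℝ _ _)
      · rw [hPhatseg]
        exact convex_finsetSum _ _ (fun i _ => convex_segment _ _)
    -- (2a): x + □ ⊆ P_T
    have hCpart : ∀ b ∈ cubeT n T, x + b ∈ PT := by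
      have hfilter_eq : Finset.univ.filter (fun i => ¬ (E i).card = 1) = I2f := by
        ext i
        simp only [Finset.mem_filter, Finset.mem_univ, true_and, hI2f]
        have := (hE1 i).card_pos
        omega
      have hPTsplit : PT = (∑ i ∈ I1f, simp0 n (S i ∩ T)) + (∑ i ∈ I2f, simp0 n (S i ∩ T)) := by
        rw [hPT, ← Finset.sum_filter_add_sum_filter_not Finset.univ
          (fun i => (E i).card = 1) (fun i => simp0 n (S i ∩ T)), hfilter_eq, ← hI1f]
      have hcube : cubeT n T = convexHull ℝ
          (∑ j : Fin n, ({0, c j • (Pi.single j 1 : Fin n → ℝ)} : Set (Fin n → ℝ))) := by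
        unfold cubeT
        rw [hTim, Finset.sum_image hinj_univ]
        rw [Finset.sum_congr rfl (fun j _ => by rw [hsgn j])]
        exact finsetSum_convexHull _ _
      intro b hb
      rw [hcube] at hb
      have hPTconv : Convex ℝ PT := by
        rw [hPT]
        exact convex_finsetSum _ _ (fun i _ => convex_convexHull ℝ _)
      have hxconv : x + b ∈ convexHull ℝ (({x} : Set (Fin n → ℝ)) +
          ∑ j : Fin n, ({0, c j • (Pi.single j 1 : Fin n → ℝ)} : Set (Fin n → ℝ))) := by
        rw [convexHull_add, convexHull_singleton]
        exact Set.add_mem_add rfl hb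
      refine (convexHull_min ?_ hPTconv) hxconv
      rintro w hw
      obtain ⟨x', hx', y, hy, rfl⟩ := Set.mem_add.1 hw
      rw [Set.mem_singleton_iff.1 hx']
      obtain ⟨wf, hwf, hwsum⟩ := (Set.mem_finset_sum _ _ _).1 hy
      set K : Finset (Fin n) :=
        Finset.univ.filter (fun j => wf j = c j • (Pi.single j 1 : Fin n → ℝ)) with hK
      have hysum : y = ∑ j ∈ K, c j • (Pi.single j 1 : Fin n → ℝ) := by
        rw [← hwsum, ← Finset.sum_filter_add_sum_filter_not Finset.univ
          (fun j => wf j = c j • (Pi.single j 1 : Fin n → ℝ)) wf, ← hK]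
        have hz : ∑ j ∈ Finset.univ.filter
            (fun j => ¬ wf j = c j • (Pi.single j 1 : Fin n → ℝ)), wf j = 0 := by
          apply Finset.sum_eq_zero
          intro j hj
          rcases hwf (Finset.mem_univ j) with h | h
          · exact h
          · exact absurd (Set.mem_singleton_iff.1 h) (Finset.mem_filter.1 hj).2
        rw [hz, add_zero]
        exact Finset.sum_congr rfl (fun j hj => (Finset.mem_filter.1 hj).2)
      obtain ⟨hfun, hfmem, hfsum⟩ := exists_cube_assignment (c := c) (A := A) (B := B) hspan K
      rw [hPTsplit]
      apply Set.add_mem_add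
      · exact finsetSum_set_subset _ _ _ (fun i _ => hsub_simp i) hx_mem
      · rw [hysum, ← hfsum, ← Finset.sum_coe_sort I2f (fun i => simp0 n (S i ∩ T))]
        apply Set.finset_sum_mem_finset_sum
        intro i _
        refine convexHull_min ?_ (convex_convexHull ℝ _) (hfmem i)
        rintro v (rfl | rfl | rfl)
        · exact subset_convexHull ℝ _ (Or.inl rfl)
        · rw [← hvA i]
          exact subset_convexHull ℝ _ (hvert_mem i.val (P i) (hPmem i))
        · rw [← hvB i]
          exact subset_convexHull ℝ _ (hvert_mem i.val (Q i) (hQmem i))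
    -- (2c): uniqueness
    have hDpart : ∀ u : Fin n → ℝ, IsIntVec u → u +ᵥ nablaT n T ⊆ Pcell → u = x := by
      intro u huint hu
      have hnablagen : ∀ ρ : Option (Fin n), sigv c - vvc c ρ ∈ nablaT n T := by
        intro ρ
        cases ρ with
        | none => rw [vvc_none, sub_zero, ← hsigmaT]; exact hσ_nabla
        | some j =>
            apply subset_convexHull ℝ _
            right
            refine ⟨(j, ε j), Finset.mem_coe.2 (hε j), ?_⟩
            show sigmaT n T - sgnVec n (j, ε j) = sigv c - vvc c (some j)
            rw [hsigmaT, hsgn j, vvc_some]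
      have hH : ∀ ρ : Option (Fin n), (u - x) + (sigv c - vvc c ρ)
          ∈ ∑ i : ↥I2f, segment ℝ (vvc c (A i)) (vvc c (B i)) := by
        intro ρ
        have h1 : u + (sigv c - vvc c ρ) ∈ Pcell :=
          hu (Set.mem_vadd_set.2 ⟨_, hnablagen ρ, rfl⟩)
        rw [hxPi] at h1
        obtain ⟨w, hw, hweq⟩ := Set.mem_vadd_set.1 h1
        have h2 : x + w = u + (sigv c - vvc c ρ) := hweq
        have h3 : w = (u - x) + (sigv c - vvc c ρ) := by
          have h4 : w = u + (sigv c - vvc c ρ) - x := by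
            rw [← h2]; abel
          rw [h4]; abel
        rw [hPhatseg] at hw
        exact h3 ▸ hw
      have hdd := unique_core hc hABne hind hcardI (u - x) (huint.sub hxint) hH
      exact sub_eq_zero.1 hdd
    exact ⟨hBpart, hCpart, hDpart⟩
  -- ### final assembly
  constructor
  · constructor
    · intro h1
      apply keyA
      have h2 := h1 hσ_nabla
      rwa [hsigmaT] at h2
    · intro h3
      exact (main h3).1
  · constructor
    · rintro ⟨-, hnab, -⟩
      apply keyA
      have h1 : x + sigmaT n T ∈ Pcell := hnab (Set.mem_vadd_set.2 ⟨_, hσ_nabla, rfl⟩)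
      rw [hxPi] at h1
      obtain ⟨w, hw, hweq⟩ := Set.mem_vadd_set.1 h1
      have h2 : w = sigmaT n T := add_left_cancel (hweq : x + w = x + sigmaT n T)
      rw [← hsigmaT, ← h2]
      exact hw
    · intro h3
      obtain ⟨hB', hC', hD'⟩ := main h3
      refine ⟨⟨hC', hxint⟩, ?_, ?_⟩
      · rintro w hw
        obtain ⟨y, hy, rfl⟩ := Set.mem_vadd_set.1 hw
        rw [hxPi]
        exact Set.mem_vadd_set.2 ⟨y, hB' hy, rfl⟩
      · rintro u ⟨-, hulatt⟩ hunab
        exact hD' u hulatt hunab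
end
end
end
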